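/- arXiv:1201.5973 — 4 statements merged into one kernel-verified Lean document; each statement's English description precedes it below -/
import Mathlib

section
/- Let R ⊆ S be a module-finite inclusion of integral domains with fraction fields K ⊆ L. Suppose Φ ∈ Hom_K(L, K) satisfies Φ(S) ⊆ R and the restriction Φ|_S : S → R generates Hom_R(S, R) as an S-module. If x ∈ L satisfies Φ(x·s) ∈ R for all s ∈ S, then x ∈ S. -/
open scoped BigOperators

section Preamble

variable {Ω : Type*} [Field Ω]

/-- The subring of `p^e`-th roots of elements of a subring `R` of `Ω`. -/
def pRoots (p : ℕ) [Fact p.Prime] [CharP Ω p] (e : ℕ) (R : Subring Ω) : Subring Ω where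
  carrier := {x | x ^ p ^ e ∈ R}
  mul_mem' := fun ha hb => by simpa [mul_pow] using R.mul_mem ha hb
  one_mem' := by simpa using R.one_mem
  add_mem' := fun {a b} ha hb => by
    have h : (a + b) ^ p ^ e = a ^ p ^ e + b ^ p ^ e := add_pow_char_pow a b p e
    simpa [Set.mem_setOf_eq, h] using R.add_mem ha hb
  zero_mem' := by
    simpa [zero_pow (pow_ne_zero e (Fact.out (p := p.Prime)).ne_zero)] using R.zero_mem
  neg_mem' := fun {a} ha => by
    have h : (-a) ^ p ^ e = (-1 : Ω) ^ p ^ e * a ^ p ^ e := by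
      rw [← neg_one_mul, mul_pow]
    show (-a) ^ p ^ e ∈ R
    rcases neg_one_pow_eq_or Ω (p ^ e) with h1 | h1
    · rw [h, h1, one_mul]; exact ha
    · rw [h, h1, neg_one_mul]; exact R.neg_mem ha

/-- `φ : Ω → Ω` restricts to an `A`-linear map from `M` to `N` (all subrings of `Ω`). -/
structure IsLinearOn (A M N : Subring Ω) (φ : Ω → Ω) : Prop where
  maps_to : ∀ x ∈ M, φ x ∈ N
  map_add : ∀ x ∈ M, ∀ y ∈ M, φ (x + y) = φ x + φ y
  map_smul : ∀ a ∈ A, ∀ x ∈ M, φ (a * x) = a * φ x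

/-- The family `b` is a free `A`-module basis of `M` (subrings of `Ω`). -/
def IsBasisOn (A M : Subring Ω) {ι : Type*} [Fintype ι] (b : ι → Ω) : Prop :=
  (∀ i, b i ∈ M) ∧
    ∀ x ∈ M, ∃! c : ι → Ω, (∀ i, c i ∈ A) ∧ x = ∑ i, c i * b i

/-- The fraction field of a subring `R` of `Ω`, as a subfield of `Ω`. -/
def fracField (R : Subring Ω) : Subfield Ω where
  carrier := {x | ∃ a ∈ R, ∃ b ∈ R, b ≠ 0 ∧ x = a / b}
  mul_mem' := by
    rintro x y ⟨a, ha, b, hb, hb0, rfl⟩ ⟨c, hc, d, hd, hd0, rfl⟩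
    exact ⟨a * c, R.mul_mem ha hc, b * d, R.mul_mem hb hd, mul_ne_zero hb0 hd0, by
      field_simp⟩
  one_mem' := ⟨1, R.one_mem, 1, R.one_mem, one_ne_zero, by simp⟩
  add_mem' := by
    rintro x y ⟨a, ha, b, hb, hb0, rfl⟩ ⟨c, hc, d, hd, hd0, rfl⟩
    refine ⟨a * d + c * b, R.add_mem (R.mul_mem ha hd) (R.mul_mem hc hb),
      b * d, R.mul_mem hb hd, mul_ne_zero hb0 hd0, ?_⟩
    field_simp
  zero_mem' := ⟨0, R.zero_mem, 1, R.one_mem, one_ne_zero, by simp⟩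
  neg_mem' := by
    rintro x ⟨a, ha, b, hb, hb0, rfl⟩
    exact ⟨-a, R.neg_mem ha, b, hb, hb0, by ring⟩
  inv_mem' := by
    rintro x ⟨a, ha, b, hb, hb0, rfl⟩
    by_cases ha0 : a = 0
    · exact ⟨0, R.zero_mem, 1, R.one_mem, one_ne_zero, by simp [ha0]⟩
    · exact ⟨b, hb, a, ha, ha0, by field_simp⟩

/-- Every element of `L` is separable over the subfield `K`. -/
def IsSeparableOn (K L : Subfield Ω) : Prop :=
  ∀ x ∈ L, ∃ f : Polynomial Ω,
    (∀ i, f.coeff i ∈ (K : Set Ω)) ∧ f.Monic ∧ f.Separable ∧ f.eval x = 0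

/-- `S` is a finitely generated `R`-module (module-finite inclusion). -/
def IsModuleFiniteOn (A M : Subring Ω) : Prop :=
  ∃ (n : ℕ) (g : Fin n → Ω), (∀ i, g i ∈ M) ∧
    ∀ x ∈ M, ∃ c : Fin n → Ω, (∀ i, c i ∈ A) ∧ x = ∑ i, c i * g i

/-- `A` is a discrete valuation ring with uniformizer `t`:  `t` is a nonunit of `A`
and every nonzero element of `A` is a unit times a power of `t`. -/
def IsDVRWith (A : Subring Ω) (t : Ω) : Prop :=
  t ∈ A ∧ t ≠ 0 ∧ (¬ ∃ w ∈ A, t * w = 1) ∧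
    ∀ x ∈ A, x ≠ 0 → ∃ (k : ℕ) (w : Ω), w ∈ A ∧ (∃ w' ∈ A, w * w' = 1) ∧ x = w * t ^ k

/-- The images of the family `b` (of elements of `M`) form a basis of `M / tM` over
`A / rA`. -/
def IsBasisModOn (A M : Subring Ω) (r t : Ω) {ι : Type*} [Fintype ι] (b : ι → Ω) : Prop :=
  (∀ j, b j ∈ M) ∧
  (∀ x ∈ M, ∃ c : ι → Ω, (∀ j, c j ∈ A) ∧ ∃ y ∈ M, x - ∑ j, c j * b j = t * y) ∧
  (∀ c : ι → Ω, (∀ j, c j ∈ A) → (∃ y ∈ M, ∑ j, c j * b j = t * y) →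
    ∀ j, ∃ a ∈ A, c j = r * a)

/-- `A` is integrally closed in its fraction field (inside `Ω`). -/
def IsNormalOn (A : Subring Ω) : Prop :=
  ∀ x ∈ fracField A, (∃ f : Polynomial Ω, f.Monic ∧ (∀ i, f.coeff i ∈ (A : Set Ω)) ∧
    f.eval x = 0) → x ∈ A

/-- `A` is F-finite: its ring of `p`-th roots is a finite `A`-module. -/
def IsFFiniteOn (p : ℕ) [Fact p.Prime] [CharP Ω p] (A : Subring Ω) : Prop :=
  IsModuleFiniteOn A (pRoots p 1 A)

end Preamble



section Aux

variable {Ω : Type*} [Field Ω]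

lemma mem_fracField_self (R : Subring Ω) {a : Ω} (ha : a ∈ R) : a ∈ fracField R :=
  ⟨a, ha, 1, R.one_mem, one_ne_zero, (div_one a).symm⟩

lemma fracField_mono {R S : Subring Ω} (h : R ≤ S) : fracField R ≤ fracField S := by
  rintro x ⟨a, ha, b, hb, hb0, rfl⟩
  exact ⟨a, h ha, b, h hb, hb0, rfl⟩

end Aux

set_option maxHeartbeats 1000000 in
set_option synthInstance.maxHeartbeats 400000 in
/-- if `Φ : L → K` is `K`-linear with `Φ(S) ⊆ R` and `Φ|_S` generates
`Hom_R(S,R)` as an `S`-module, then `Φ(xS) ⊆ R` forces `x ∈ S`. -/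
theorem mem_of_generator_maps_into {Ω : Type*} [Field Ω]
    (R S : Subring Ω) (hRS : R ≤ S) (hfin : IsModuleFiniteOn R S)
    (Φ : Ω → Ω)
    (hΦ : IsLinearOn (fracField R).toSubring (fracField S).toSubring
      (fracField R).toSubring Φ)
    (hΦS : ∀ a ∈ S, Φ a ∈ R)
    (hgen : ∀ ψ : Ω → Ω, IsLinearOn R S R ψ → ∃ t ∈ S, ∀ a ∈ S, ψ a = Φ (t * a))
    (x : Ω) (hx : x ∈ fracField S) (hxS : ∀ a ∈ S, Φ (x * a) ∈ R) :
    x ∈ S := by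
  classical
  set K' := fracField R with hK'
  set L' := fracField S with hL'
  have hSL : ∀ a ∈ S, a ∈ L' := fun a ha => mem_fracField_self S ha
  have hRK : ∀ a ∈ R, a ∈ K' := fun a ha => mem_fracField_self R ha
  have hΦadd : ∀ u ∈ L', ∀ v ∈ L', Φ (u + v) = Φ u + Φ v := hΦ.map_add
  have hΦsmul : ∀ k ∈ K', ∀ v ∈ L', Φ (k * v) = k * Φ v := hΦ.map_smul
  obtain ⟨n, g, hgS, hgspan⟩ := hfin
  set T : Submodule K' Ω := Submodule.span K' (Set.range g) with hTdef
  have hgT : ∀ j, g j ∈ T := fun j => Submodule.subset_span (Set.mem_range_self j)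
  have hST : ∀ s ∈ S, s ∈ T := by
    intro s hs
    obtain ⟨c, hc, rfl⟩ := hgspan s hs
    refine Submodule.sum_mem _ fun i _ => ?_
    have h1 : c i * g i = (⟨c i, hRK _ (hc i)⟩ : K') • g i := rfl
    rw [h1]
    exact Submodule.smul_mem _ _ (hgT i)
  have hTL : ∀ z ∈ T, z ∈ L' := by
    intro z hz
    induction hz using Submodule.span_induction with
    | mem w hw => obtain ⟨j, rfl⟩ := hw; exact hSL _ (hgS j)
    | zero => exact zero_mem L'
    | add u v hu hv hu' hv' => exact add_mem hu' hv'
    | smul k u hu hu' => exact mul_mem (fracField_mono hRS k.2) hu'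
  haveI : FiniteDimensional K' T := FiniteDimensional.span_of_finite K' (Set.finite_range g)
  have hmul : ∀ a ∈ S, ∀ z ∈ T, a * z ∈ T := by
    intro a ha z hz
    induction hz using Submodule.span_induction with
    | mem w hw => obtain ⟨j, rfl⟩ := hw; exact hST _ (S.mul_mem ha (hgS j))
    | zero => rw [mul_zero]; exact zero_mem T
    | add u v hu hv hu' hv' => rw [mul_add]; exact add_mem hu' hv'
    | smul k u hu hu' =>
        have h1 : a * (k • u) = k • (a * u) := by
          simp only [Subfield.smul_def, smul_eq_mul]; ring
        rw [h1]; exact Submodule.smul_mem _ _ hu'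
  have hinv : ∀ b ∈ S, b ≠ 0 → b⁻¹ ∈ T := by
    intro b hb hb0
    let μ : T →ₗ[K'] T :=
      { toFun := fun z => ⟨b * z, hmul b hb z z.2⟩
        map_add' := fun z w => Subtype.ext (by simp [mul_add])
        map_smul' := fun k z => Subtype.ext
          (show b * ((k : Ω) * (z : Ω)) = (k : Ω) * (b * (z : Ω)) by ring) }
    have hinj : Function.Injective μ := by
      intro z w h
      have h1 : b * (z : Ω) = b * (w : Ω) := congrArg Subtype.val h
      exact Subtype.ext (mul_left_cancel₀ hb0 h1)
    obtain ⟨z, hz⟩ := LinearMap.surjective_of_injective hinj ⟨1, hST 1 S.one_mem⟩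
    have h1 : b * (z : Ω) = 1 := congrArg Subtype.val hz
    have h2 : b⁻¹ = (z : Ω) := inv_eq_of_mul_eq_one_right h1
    rw [h2]; exact z.2
  have hLT : ∀ z ∈ L', z ∈ T := by
    rintro z ⟨a, ha, b, hb, hb0, rfl⟩
    rw [div_eq_mul_inv]
    exact hmul a ha _ (hinv b hb hb0)
  -- Step 1: apply hgen to a ↦ Φ (x * a)
  have hψ₀ : IsLinearOn R S R (fun a => Φ (x * a)) := by
    refine ⟨fun a ha => hxS a ha, ?_, ?_⟩
    · intro a ha b hb
      have := hΦadd (x * a) (mul_mem hx (hSL a ha)) (x * b) (mul_mem hx (hSL b hb))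
      simpa [mul_add] using this
    · intro c hc a ha
      have h1 : x * (c * a) = c * (x * a) := by ring
      rw [h1]
      exact hΦsmul c (hRK c hc) (x * a) (mul_mem hx (hSL a ha))
  obtain ⟨t, htS, ht⟩ := hgen _ hψ₀
  by_cases hxt : x = t
  · rw [hxt]; exact htS
  exfalso
  set y := x - t with hy
  have hyL : y ∈ L' := sub_mem hx (hSL t htS)
  have hy0 : y ≠ 0 := sub_ne_zero.mpr hxt
  have hΦ0 : Φ 0 = 0 := by
    have := hΦsmul 0 (zero_mem K') 1 (hSL 1 S.one_mem)
    simpa using this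
  have hΦneg : ∀ v ∈ L', Φ (-v) = -Φ v := by
    intro v hv
    have := hΦsmul (-1) (neg_mem (one_mem K')) v hv
    simpa using this
  have hyS : ∀ s ∈ S, Φ (y * s) = 0 := by
    intro s hs
    have h1 : y * s = x * s + -(t * s) := by rw [hy]; ring
    have hts : t * s ∈ L' := mul_mem (hSL t htS) (hSL s hs)
    rw [h1, hΦadd _ (mul_mem hx (hSL s hs)) _ (neg_mem hts), hΦneg _ hts, ht s hs]
    ring
  have hyT : ∀ z ∈ T, Φ (y * z) = 0 := by
    intro z hz
    induction hz using Submodule.span_induction with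
    | mem w hw => obtain ⟨j, rfl⟩ := hw; exact hyS _ (hgS j)
    | zero => rw [mul_zero]; exact hΦ0
    | add u v hu hv hu' hv' =>
        rw [mul_add, hΦadd _ (mul_mem hyL (hTL u hu)) _ (mul_mem hyL (hTL v hv)), hu', hv',
          add_zero]
    | smul k u hu hu' =>
        have h1 : y * (k • u) = (k : Ω) * (y * u) := by
          simp only [Subfield.smul_def, smul_eq_mul]; ring
        rw [h1, hΦsmul _ k.2 _ (mul_mem hyL (hTL u hu)), hu', mul_zero]
  have hΦL : ∀ w ∈ L', Φ w = 0 := by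
    intro w hw
    have h1 : w = y * (y⁻¹ * w) := by field_simp
    rw [h1]
    exact hyT _ (hLT _ (mul_mem (inv_mem hyL) hw))
  -- Step 2: construct a nonzero element of Hom_R(S, R)
  let B := Module.Basis.ofVectorSpace K' T
  have honeT : (1 : Ω) ∈ T := hST 1 S.one_mem
  have hone : (⟨1, honeT⟩ : T) ≠ 0 := by
    intro h
    exact one_ne_zero (congrArg Subtype.val h)
  have hrepr : B.repr ⟨1, honeT⟩ ≠ 0 := by
    intro h
    apply hone
    apply B.repr.injective
    rw [h, map_zero]
  obtain ⟨i, hi⟩ : ∃ i, B.repr ⟨1, honeT⟩ i ≠ 0 := by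
    by_contra hcon
    push_neg at hcon
    exact hrepr (Finsupp.ext fun j => hcon j)
  let lam : T →ₗ[K'] K' := B.coord i
  have hlam1 : lam ⟨1, honeT⟩ ≠ 0 := by
    simpa [lam, Module.Basis.coord_apply] using hi
  have hden : ∀ j : Fin n, ∃ b : Ω, b ∈ R ∧ b ≠ 0 ∧ b * ((lam ⟨g j, hgT j⟩ : K') : Ω) ∈ R := by
    intro j
    obtain ⟨a, ha, b, hb, hb0, he⟩ := (lam ⟨g j, hgT j⟩).2
    refine ⟨b, hb, hb0, ?_⟩
    have h1 : b * (a / b) = a := by field_simp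
    rw [he, h1]; exact ha
  choose d hdR hd0 hdr using hden
  set r : Ω := ∏ j, d j with hrdef
  have hrR : r ∈ R := prod_mem fun j _ => hdR j
  have hr0 : r ≠ 0 := Finset.prod_ne_zero_iff.mpr fun j _ => hd0 j
  have hrglam : ∀ j, r * ((lam ⟨g j, hgT j⟩ : K') : Ω) ∈ R := by
    intro j
    have h1 : r = (∏ k ∈ Finset.univ.erase j, d k) * d j :=
      (Finset.prod_erase_mul _ _ (Finset.mem_univ j)).symm
    rw [h1, mul_assoc]
    exact R.mul_mem (prod_mem fun k _ => hdR k) (hdr j)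
  -- the coordinate computation on S
  have hcoord : ∀ s (hs : s ∈ S), r * ((lam ⟨s, hST s hs⟩ : K') : Ω) ∈ R := by
    intro s hs
    obtain ⟨c, hc, hs'⟩ := hgspan s hs
    have h1 : (⟨s, hST s hs⟩ : T)
        = ∑ j, (⟨c j, hRK _ (hc j)⟩ : K') • (⟨g j, hgT j⟩ : T) := by
      apply Subtype.ext
      show s = _
      rw [hs']
      push_cast
      rfl
    have h2 : ((lam ⟨s, hST s hs⟩ : K') : Ω)
        = ∑ j, c j * ((lam ⟨g j, hgT j⟩ : K') : Ω) := by
      rw [h1, map_sum]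
      push_cast
      refine Finset.sum_congr rfl fun j _ => ?_
      rw [map_smul]
      rfl
    rw [h2, Finset.mul_sum]
    refine sum_mem fun j _ => ?_
    have h3 : r * (c j * ((lam ⟨g j, hgT j⟩ : K') : Ω))
        = c j * (r * ((lam ⟨g j, hgT j⟩ : K') : Ω)) := by ring
    rw [h3]
    exact R.mul_mem (hc j) (hrglam j)
  let ψ : Ω → Ω := fun a => if h : a ∈ S then r * ((lam ⟨a, hST a h⟩ : K') : Ω) else 0
  have hψval : ∀ a (ha : a ∈ S), ψ a = r * ((lam ⟨a, hST a ha⟩ : K') : Ω) := by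
    intro a ha
    simp only [ψ, dif_pos ha]
  have hψlin : IsLinearOn R S R ψ := by
    refine ⟨?_, ?_, ?_⟩
    · intro a ha
      rw [hψval a ha]
      exact hcoord a ha
    · intro a ha b hb
      rw [hψval a ha, hψval b hb, hψval (a + b) (S.add_mem ha hb)]
      have h1 : (⟨a + b, hST _ (S.add_mem ha hb)⟩ : T) = ⟨a, hST a ha⟩ + ⟨b, hST b hb⟩ :=
        Subtype.ext rfl
      rw [h1, map_add]
      push_cast
      ring
    · intro c hc a ha
      rw [hψval a ha, hψval (c * a) (S.mul_mem (hRS hc) ha)]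
      have h1 : (⟨c * a, hST _ (S.mul_mem (hRS hc) ha)⟩ : T)
          = (⟨c, hRK c hc⟩ : K') • (⟨a, hST a ha⟩ : T) := Subtype.ext rfl
      rw [h1, map_smul]
      have h2 : ((((⟨c, hRK c hc⟩ : K') • lam ⟨a, hST a ha⟩) : K') : Ω)
          = c * ((lam ⟨a, hST a ha⟩ : K') : Ω) := rfl
      rw [h2]
      ring
  obtain ⟨t', ht'S, ht'⟩ := hgen ψ hψlin
  have h1 : ψ 1 = 0 := by
    rw [ht' 1 S.one_mem]
    exact hΦL _ (mul_mem (hSL t' ht'S) (hSL 1 S.one_mem))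
  rw [hψval 1 S.one_mem] at h1
  rcases mul_eq_zero.mp h1 with h | h
  · exact hr0 h
  · exact hlam1 (by exact_mod_cast h)
end

section
/- Let R be an F-finite DVR of characteristic p > 0 with uniformizer r, and let {u_{j,i}^{1/p^e} r^{i/p^e}} be a free R-basis of R^{1/p^e} as in the basis lemma. Fix a basis element x^{1/p^e} = (u_{j,p^e−1} r^{p^e−1})^{1/p^e} (one from the top row i = p^e − 1), and let φ_x : R^{1/p^e} → R be any R-linear map with φ_x(x^{1/p^e}) = 1. Then φ_x generates Hom_R(R^{1/p^e}, R) as an R^{1/p^e}-module. -/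
open scoped BigOperators

section Gen6Aux

variable {Ω : Type*} [Field Ω]

lemma gen6_mem_pRoots (p : ℕ) [Fact p.Prime] [CharP Ω p] (e : ℕ) (R : Subring Ω) {x : Ω} :
    x ∈ pRoots p e R ↔ x ^ p ^ e ∈ R := Iff.rfl

lemma gen6_R_le_pRoots (p : ℕ) [Fact p.Prime] [CharP Ω p] (e : ℕ) (R : Subring Ω) {x : Ω}
    (hx : x ∈ R) : x ∈ pRoots p e R :=
  (gen6_mem_pRoots p e R).mpr (pow_mem hx _)

lemma gen6_unit_of_not_mem (R : Subring Ω) {r x : Ω} (hR : IsDVRWith R r) (hx : x ∈ R)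
    (h : ¬ ∃ a ∈ R, x = r * a) : ∃ w ∈ R, x * w = 1 := by
  have hx0 : x ≠ 0 := fun h0 => h ⟨0, R.zero_mem, by simp [h0]⟩
  obtain ⟨k, w, hwR, ⟨w', hw'R, hww'⟩, hxw⟩ := hR.2.2.2 x hx hx0
  cases k with
  | zero => exact ⟨w', hw'R, by rw [hxw]; simpa using hww'⟩
  | succ k =>
      exact absurd ⟨w * r ^ k, R.mul_mem hwR (pow_mem hR.1 k), by rw [hxw]; ring⟩ h

lemma gen6_eq_zero_of_all_div (R : Subring Ω) {r x : Ω} (hR : IsDVRWith R r)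
    (h : ∀ n : ℕ, ∃ y ∈ R, x = r ^ n * y) : x = 0 := by
  by_contra hx0
  obtain ⟨y0, hy0, h0⟩ := h 0
  have hxR : x ∈ R := by rw [h0, pow_zero, one_mul]; exact hy0
  obtain ⟨k, w, hwR, ⟨w', hw'R, hww'⟩, hxw⟩ := hR.2.2.2 x hxR hx0
  obtain ⟨y, hyR, hy⟩ := h (k + 1)
  have hr0 : r ≠ 0 := hR.2.1
  have h2 : w * r ^ k = (r * y) * r ^ k := by
    calc w * r ^ k = x := hxw.symm
    _ = r ^ (k + 1) * y := hy
    _ = (r * y) * r ^ k := by ring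
  have hw : w = r * y := mul_right_cancel₀ (pow_ne_zero _ hr0) h2
  exact hR.2.2.1 ⟨y * w', R.mul_mem hyR hw'R, by rw [← mul_assoc, ← hw]; exact hww'⟩

lemma gen6_unit_in_pRoots (p : ℕ) [Fact p.Prime] [CharP Ω p] {e : ℕ} (R : Subring Ω)
    {r ρ x : Ω} (hR : IsDVRWith R r) (hρ : ρ ^ p ^ e = r) (hx : x ∈ pRoots p e R)
    (h : ¬ ∃ y ∈ pRoots p e R, x = ρ * y) : ∃ w ∈ pRoots p e R, x * w = 1 := by
  have hq : 0 < p ^ e := pow_pos (Fact.out (p := p.Prime)).pos e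
  have hr0 : r ≠ 0 := hR.2.1
  have hρ0 : ρ ≠ 0 := by
    intro h0
    exact hr0 (by rw [← hρ, h0, zero_pow hq.ne'])
  have hx0 : x ≠ 0 := fun h0 => h ⟨0, (pRoots p e R).zero_mem, by simp [h0]⟩
  have hxq : x ^ p ^ e ∈ R := hx
  obtain ⟨k, w, hwR, ⟨w', hw'R, hww'⟩, hxw⟩ := hR.2.2.2 _ hxq (pow_ne_zero _ hx0)
  cases k with
  | succ k =>
      refine absurd ⟨x / ρ, ?_, (mul_div_cancel₀ x hρ0).symm⟩ h
      rw [gen6_mem_pRoots, div_pow, hρ, hxw]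
      have : w * r ^ (k + 1) / r = w * r ^ k := by field_simp; ring
      rw [this]
      exact R.mul_mem hwR (pow_mem hR.1 k)
  | zero =>
      refine ⟨x ^ (p ^ e - 1) * w', ?_, ?_⟩
      · rw [gen6_mem_pRoots, mul_pow, ← pow_mul, mul_comm (p ^ e - 1) (p ^ e), pow_mul]
        exact mul_mem (pow_mem hxq _) (pow_mem hw'R _)
      · have hx' : x * x ^ (p ^ e - 1) = x ^ p ^ e := by
          rw [← pow_succ']
          congr 1
          omega
        rw [← mul_assoc, hx', hxw, pow_zero, mul_one]
        exact hww'

lemma gen6_lin_zero {A M N : Subring Ω} {φ : Ω → Ω} (h : IsLinearOn A M N φ) : φ 0 = 0 := by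
  have h0 := h.map_add 0 M.zero_mem 0 M.zero_mem
  rw [add_zero] at h0
  exact (left_eq_add.mp h0)

lemma gen6_lin_sum {A M N : Subring Ω} {φ : Ω → Ω} (h : IsLinearOn A M N φ)
    {ι : Type*} (s : Finset ι) (f : ι → Ω) (hf : ∀ i ∈ s, f i ∈ M) :
    φ (∑ i ∈ s, f i) = ∑ i ∈ s, φ (f i) := by
  classical
  induction s using Finset.cons_induction with
  | empty => simpa using gen6_lin_zero h
  | cons a s ha ih =>
      rw [Finset.sum_cons, Finset.sum_cons,
        h.map_add _ (hf a (Finset.mem_cons_self a s)) _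
          (sum_mem fun i hi => hf i (Finset.mem_cons_of_mem hi)),
        ih fun i hi => hf i (Finset.mem_cons_of_mem hi)]

end Gen6Aux
section Gen6Dev

variable {Ω : Type*} [Field Ω]

lemma gen6_dev (p : ℕ) [Fact p.Prime] [CharP Ω p] (R : Subring Ω) (r ρ : Ω)
    (e m : ℕ) (hρ : ρ ^ p ^ e = r) (u : Fin (p ^ e) → Fin m → Ω)
    (hu : ∀ i, IsBasisModOn R (pRoots p e R) r ρ (u i)) :
    ∀ a ∈ pRoots p e R, ∃ c : Fin (p ^ e) × Fin m → Ω, (∀ α, c α ∈ R) ∧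
      ∃ y ∈ pRoots p e R,
        a = (∑ α : Fin (p ^ e) × Fin m, c α * (u α.1 α.2 * ρ ^ (α.1 : ℕ))) + r * y := by
  classical
  have key : ∀ n : ℕ, n ≤ p ^ e → ∀ a ∈ pRoots p e R,
      ∃ c : Fin (p ^ e) × Fin m → Ω, (∀ α, c α ∈ R) ∧
      ∃ y ∈ pRoots p e R,
        a = (∑ α : Fin (p ^ e) × Fin m,
          if (α.1 : ℕ) < n then c α * (u α.1 α.2 * ρ ^ (α.1 : ℕ)) else 0) + ρ ^ n * y := by
    intro n
    induction n with
    | zero =>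
        intro _ a ha
        exact ⟨fun _ => 0, fun _ => R.zero_mem, a, ha, by simp⟩
    | succ n ih =>
        intro hn a ha
        obtain ⟨c, hc, y, hyS, hy⟩ := ih (Nat.le_of_succ_le hn) a ha
        have hnq : n < p ^ e := Nat.lt_of_succ_le hn
        set N : Fin (p ^ e) := ⟨n, hnq⟩ with hN
        obtain ⟨cf, hcf, z, hzS, hz⟩ := (hu N).2.1 y hyS
        have hy' : y = (∑ j, cf j * u N j) + ρ * z := by
          have := sub_eq_iff_eq_add.mp hz
          rw [this]; ring
        refine ⟨fun α => if α.1 = N then cf α.2 else c α, ?_, z, hzS, ?_⟩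
        · intro α; dsimp only; split
          · exact hcf _
          · exact hc _
        · dsimp only
          have hsplit : ∀ α : Fin (p ^ e) × Fin m,
              (if (α.1 : ℕ) < n + 1 then
                (if α.1 = N then cf α.2 else c α) * (u α.1 α.2 * ρ ^ (α.1 : ℕ)) else 0)
              = (if (α.1 : ℕ) < n then c α * (u α.1 α.2 * ρ ^ (α.1 : ℕ)) else 0)
                + (if α.1 = N then cf α.2 * (u α.1 α.2 * ρ ^ (α.1 : ℕ)) else 0) := by
            intro α
            rcases lt_trichotomy ((α.1 : ℕ)) n with h | h | h
            · have h2 : α.1 ≠ N := by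
                intro hEq
                have := congrArg Fin.val hEq
                simp [hN] at this; omega
              simp [h, h2, Nat.lt_succ_of_lt h]
            · have h2 : α.1 = N := Fin.ext (by simpa [hN] using h)
              have h3 : ¬ ((α.1 : ℕ) < n) := by omega
              simp [h2, h3, h, hN]
            · have h2 : α.1 ≠ N := by
                intro hEq
                have := congrArg Fin.val hEq
                simp [hN] at this; omega
              have h1 : ¬ ((α.1 : ℕ) < n + 1) := by omega
              have h3 : ¬ ((α.1 : ℕ) < n) := by omega
              rw [if_neg h1, if_neg h3, if_neg h2, add_zero]
          rw [Finset.sum_congr rfl (fun α _ => hsplit α), Finset.sum_add_distrib]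
          have h4 : (∑ α : Fin (p ^ e) × Fin m,
              if α.1 = N then cf α.2 * (u α.1 α.2 * ρ ^ (α.1 : ℕ)) else 0)
              = ρ ^ n * ∑ j, cf j * u N j := by
            rw [Fintype.sum_prod_type]
            have hinner : ∀ i : Fin (p ^ e),
                (∑ j, if i = N then cf j * (u i j * ρ ^ (i : ℕ)) else 0)
                = if i = N then (∑ j, cf j * (u i j * ρ ^ (i : ℕ))) else 0 := by
              intro i; split <;> simp
            rw [Finset.sum_congr rfl fun i _ => hinner i, Finset.sum_ite_eq' Finset.univ N _,
              if_pos (Finset.mem_univ N), Finset.mul_sum]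
            refine Finset.sum_congr rfl fun j _ => ?_
            have : ((N : Fin (p ^ e)) : ℕ) = n := rfl
            rw [this]; ring
          rw [h4, hy, hy']
          ring
  intro a ha
  obtain ⟨c, hc, y, hyS, hy⟩ := key (p ^ e) le_rfl a ha
  refine ⟨c, hc, y, hyS, ?_⟩
  rw [hy, hρ]
  congr 1
  exact Finset.sum_congr rfl fun α _ => if_pos α.1.isLt

end Gen6Dev
section Gen6Ker

variable {Ω : Type*} [Field Ω]

lemma gen6_ker (p : ℕ) [Fact p.Prime] [CharP Ω p] (R : Subring Ω) (r ρ : Ω)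
    (hR : IsDVRWith R r) (e m : ℕ) (hρ : ρ ^ p ^ e = r)
    (u : Fin (p ^ e) → Fin m → Ω)
    (hu : ∀ i, IsBasisModOn R (pRoots p e R) r ρ (u i))
    (itop : Fin (p ^ e)) (j₀ : Fin m)
    (φx : Ω → Ω) (hlin : IsLinearOn R (pRoots p e R) R φx)
    (hval : φx (u itop j₀ * ρ ^ (p ^ e - 1)) = 1)
    (c : Fin (p ^ e) × Fin m → Ω) (hcR : ∀ α, c α ∈ R)
    (hker : ∀ β : Fin (p ^ e) × Fin m, ∃ a ∈ R,
      φx ((u β.1 β.2 * ρ ^ (β.1 : ℕ)) *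
        ∑ α : Fin (p ^ e) × Fin m, c α * (u α.1 α.2 * ρ ^ (α.1 : ℕ))) = r * a) :
    ∀ α, ∃ a ∈ R, c α = r * a := by
  classical
  by_contra hbad
  push_neg at hbad
  obtain ⟨α₀, hα₀⟩ := hbad
  have hq : 0 < p ^ e := pow_pos (Fact.out (p := p.Prime)).pos e
  have hr0 : r ≠ 0 := hR.2.1
  have hρ0 : ρ ≠ 0 := fun h0 => hr0 (by rw [← hρ, h0, zero_pow hq.ne'])
  have hρS : ρ ∈ pRoots p e R := by rw [gen6_mem_pRoots, hρ]; exact hR.1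
  -- minimal bad row index
  have hPex : ∃ n : ℕ, ∃ (hn : n < p ^ e) (j : Fin m), ∀ a ∈ R, c (⟨n, hn⟩, j) ≠ r * a :=
    ⟨(α₀.1 : ℕ), α₀.1.isLt, α₀.2, fun a ha hEq => hα₀ a ha hEq⟩
  set n₀ := Nat.find hPex with hn₀def
  obtain ⟨hn₀, j₁, hj₁⟩ := Nat.find_spec hPex
  have hmin : ∀ i : Fin (p ^ e), (i : ℕ) < n₀ → ∀ j, ∃ a ∈ R, c (i, j) = r * a := by
    intro i hi j
    by_contra hno
    push_neg at hno
    exact Nat.find_min hPex hi ⟨i.isLt, j, hno⟩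
  set i₀ : Fin (p ^ e) := ⟨n₀, hn₀⟩ with hi₀def
  set s : Ω := ∑ α : Fin (p ^ e) × Fin m, c α * (u α.1 α.2 * ρ ^ (α.1 : ℕ)) with hsdef
  have hsS : s ∈ pRoots p e R := sum_mem fun α _ =>
    mul_mem (gen6_R_le_pRoots p e R (hcR α)) (mul_mem ((hu α.1).1 α.2) (pow_mem hρS _))
  set s₀ : Ω := ∑ α : Fin (p ^ e) × Fin m,
    (if (α.1 : ℕ) < n₀ then (c α / r) * (u α.1 α.2 * ρ ^ ((α.1 : ℕ) + p ^ e - n₀))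
      else c α * (u α.1 α.2 * ρ ^ ((α.1 : ℕ) - n₀))) with hs₀def
  have hdivR : ∀ α : Fin (p ^ e) × Fin m, (α.1 : ℕ) < n₀ → c α / r ∈ R := by
    intro α hα
    obtain ⟨a, haR, hac⟩ := hmin α.1 hα α.2
    have : c (α.1, α.2) / r = a := by rw [hac, mul_div_cancel_left₀ a hr0]
    rw [show α = (α.1, α.2) from rfl, this]
    exact haR
  have hs₀S : s₀ ∈ pRoots p e R := by
    rw [hs₀def]
    refine sum_mem fun α _ => ?_
    split
    · next h =>
        exact mul_mem (gen6_R_le_pRoots p e R (hdivR α h)) (mul_mem ((hu α.1).1 α.2) (pow_mem hρS _))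
    · exact mul_mem (gen6_R_le_pRoots p e R (hcR α)) (mul_mem ((hu α.1).1 α.2) (pow_mem hρS _))
  have hsdecomp : s = ρ ^ n₀ * s₀ := by
    rw [hsdef, hs₀def, Finset.mul_sum]
    refine Finset.sum_congr rfl fun α _ => ?_
    split
    · next h =>
        obtain ⟨a, haR, hac⟩ := hmin α.1 h α.2
        have hca : c (α.1, α.2) / r = a := by rw [hac, mul_div_cancel_left₀ a hr0]
        have hexp : n₀ + ((α.1 : ℕ) + p ^ e - n₀) = (α.1 : ℕ) + p ^ e := by omega
        have e1 : ρ ^ n₀ * ρ ^ ((α.1 : ℕ) + p ^ e - n₀) = ρ ^ (α.1 : ℕ) * r := by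
          rw [← pow_add, hexp, pow_add, hρ]
        calc c α * (u α.1 α.2 * ρ ^ (α.1 : ℕ))
            = (c α / r) * (u α.1 α.2 * (ρ ^ (α.1 : ℕ) * r)) := by
              field_simp
          _ = ρ ^ n₀ * ((c α / r) * (u α.1 α.2 * ρ ^ ((α.1 : ℕ) + p ^ e - n₀))) := by
              rw [← e1]; ring
    · next h =>
        have hle : n₀ ≤ (α.1 : ℕ) := not_lt.mp h
        have e1 : ρ ^ n₀ * ρ ^ ((α.1 : ℕ) - n₀) = ρ ^ (α.1 : ℕ) := by
          rw [← pow_add]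
          congr 1
          omega
        rw [← e1]; ring
  -- s₀ = row + ρ * y
  set y : Ω := ∑ α : Fin (p ^ e) × Fin m,
    (if α.1 = i₀ then 0 else
      if (α.1 : ℕ) < n₀ then (c α / r) * (u α.1 α.2 * ρ ^ ((α.1 : ℕ) + p ^ e - n₀ - 1))
      else c α * (u α.1 α.2 * ρ ^ ((α.1 : ℕ) - n₀ - 1))) with hydef
  have hyS : y ∈ pRoots p e R := by
    rw [hydef]
    refine sum_mem fun α _ => ?_
    split
    · exact zero_mem _
    split
    · next _ h =>
        exact mul_mem (gen6_R_le_pRoots p e R (hdivR α h)) (mul_mem ((hu α.1).1 α.2) (pow_mem hρS _))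
    · exact mul_mem (gen6_R_le_pRoots p e R (hcR α)) (mul_mem ((hu α.1).1 α.2) (pow_mem hρS _))
  have hs₀row : s₀ = (∑ j, c (i₀, j) * u i₀ j) + ρ * y := by
    have hterm : ∀ α : Fin (p ^ e) × Fin m,
        (if (α.1 : ℕ) < n₀ then (c α / r) * (u α.1 α.2 * ρ ^ ((α.1 : ℕ) + p ^ e - n₀))
          else c α * (u α.1 α.2 * ρ ^ ((α.1 : ℕ) - n₀)))
        = (if α.1 = i₀ then c α * u α.1 α.2 else 0) +
          ρ * (if α.1 = i₀ then 0 else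
            if (α.1 : ℕ) < n₀ then (c α / r) * (u α.1 α.2 * ρ ^ ((α.1 : ℕ) + p ^ e - n₀ - 1))
            else c α * (u α.1 α.2 * ρ ^ ((α.1 : ℕ) - n₀ - 1))) := by
      intro α
      by_cases h1 : α.1 = i₀
      · have hv : (α.1 : ℕ) = n₀ := by rw [h1]
        rw [if_pos h1, if_pos h1, mul_zero, add_zero, if_neg (by omega), hv, Nat.sub_self,
          pow_zero, mul_one]
      · rw [if_neg h1, if_neg h1]
        have hv : (α.1 : ℕ) ≠ n₀ := fun hEq => h1 (Fin.ext hEq)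
        by_cases h2 : (α.1 : ℕ) < n₀
        · rw [if_pos h2, if_pos h2, zero_add]
          have e1 : ρ * ρ ^ ((α.1 : ℕ) + p ^ e - n₀ - 1) = ρ ^ ((α.1 : ℕ) + p ^ e - n₀) := by
            rw [← pow_succ']
            congr 1
            omega
          rw [← e1]; ring
        · rw [if_neg h2, if_neg h2, zero_add]
          have e1 : ρ * ρ ^ ((α.1 : ℕ) - n₀ - 1) = ρ ^ ((α.1 : ℕ) - n₀) := by
            rw [← pow_succ']
            congr 1
            omega
          rw [← e1]; ring
    rw [hs₀def, Finset.sum_congr rfl fun α _ => hterm α, Finset.sum_add_distrib]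
    congr 1
    · rw [Fintype.sum_prod_type]
      have hinner : ∀ i : Fin (p ^ e),
          (∑ j, if i = i₀ then c (i, j) * u i j else 0)
          = if i = i₀ then (∑ j, c (i, j) * u i j) else 0 := by
        intro i; split <;> simp
      rw [Finset.sum_congr rfl fun i _ => hinner i, Finset.sum_ite_eq' Finset.univ i₀ _,
        if_pos (Finset.mem_univ i₀)]
    · rw [hydef, Finset.mul_sum]
  -- s₀ is a unit of S
  have hs₀unit : ∃ w ∈ pRoots p e R, s₀ * w = 1 := by
    refine gen6_unit_in_pRoots p R hR hρ hs₀S ?_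
    rintro ⟨z, hzS, hz⟩
    obtain ⟨a, haR, hac⟩ := (hu i₀).2.2 (fun j => c (i₀, j)) (fun j => hcR _)
      ⟨z - y, sub_mem hzS hyS, by rw [mul_sub, ← hz, hs₀row]; ring⟩ j₁
    exact hj₁ a haR hac
  obtain ⟨sInv, hsInvS, hsInv⟩ := hs₀unit
  -- expand u itop j₀ * sInv in row i₁
  set i₁ : Fin (p ^ e) := ⟨p ^ e - 1 - n₀, by omega⟩ with hi₁def
  obtain ⟨γ, hγR, y₂, hy₂S, hy₂⟩ := (hu i₁).2.1 (u itop j₀ * sInv)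
    (mul_mem ((hu itop).1 j₀) hsInvS)
  have h1 : u itop j₀ * sInv = (∑ j, γ j * u i₁ j) + ρ * y₂ := by
    have := sub_eq_iff_eq_add.mp hy₂
    rw [this, add_comm]
  have e1 : ρ ^ ((i₁ : ℕ)) * ρ ^ n₀ = ρ ^ (p ^ e - 1) := by
    rw [← pow_add]
    congr 1
    show p ^ e - 1 - n₀ + n₀ = p ^ e - 1
    omega
  have e2 : ρ * ρ ^ (p ^ e - 1) = r := by
    rw [← pow_succ', ← hρ]
    congr 1
    omega
  have e3 : ∀ j, (u i₁ j * ρ ^ ((i₁ : ℕ))) * s = u i₁ j * (s₀ * ρ ^ (p ^ e - 1)) := by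
    intro j
    rw [hsdecomp]
    calc (u i₁ j * ρ ^ ((i₁ : ℕ))) * (ρ ^ n₀ * s₀)
        = u i₁ j * (s₀ * (ρ ^ ((i₁ : ℕ)) * ρ ^ n₀)) := by ring
      _ = u i₁ j * (s₀ * ρ ^ (p ^ e - 1)) := by rw [e1]
  have h3 : sInv * s₀ = 1 := by rw [mul_comm]; exact hsInv
  have hEq : u itop j₀ * ρ ^ (p ^ e - 1)
      = (∑ j, γ j * ((u i₁ j * ρ ^ ((i₁ : ℕ))) * s)) + r * (y₂ * s₀) := by
    have step1 : u itop j₀ * ρ ^ (p ^ e - 1) = (u itop j₀ * sInv) * (s₀ * ρ ^ (p ^ e - 1)) := by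
      rw [show (u itop j₀ * sInv) * (s₀ * ρ ^ (p ^ e - 1))
        = u itop j₀ * ((sInv * s₀) * ρ ^ (p ^ e - 1)) from by ring, h3, one_mul]
    rw [step1, h1, add_mul, Finset.sum_mul]
    congr 1
    · exact Finset.sum_congr rfl fun j _ => by rw [e3 j]; ring
    · rw [← e2]; ring
  -- apply φx
  have hbbS : ∀ (i : Fin (p ^ e)) (j : Fin m), u i j * ρ ^ (i : ℕ) ∈ pRoots p e R :=
    fun i j => mul_mem ((hu i).1 j) (pow_mem hρS _)
  have hXS : y₂ * s₀ ∈ pRoots p e R := mul_mem hy₂S hs₀S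
  have htermS : ∀ j ∈ Finset.univ (α := Fin m),
      γ j * ((u i₁ j * ρ ^ ((i₁ : ℕ))) * s) ∈ pRoots p e R :=
    fun j _ => mul_mem (gen6_R_le_pRoots p e R (hγR j)) (mul_mem (hbbS i₁ j) hsS)
  have hφeq : (1 : Ω) = (∑ j, γ j * φx ((u i₁ j * ρ ^ ((i₁ : ℕ))) * s))
      + r * φx (y₂ * s₀) := by
    rw [← hval, hEq, hlin.map_add _ (sum_mem htermS)
      _ (mul_mem (gen6_R_le_pRoots p e R hR.1) hXS),
      gen6_lin_sum hlin Finset.univ _ htermS, hlin.map_smul r hR.1 _ hXS]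
    congr 1
    exact Finset.sum_congr rfl fun j _ =>
      hlin.map_smul (γ j) (hγR j) _ (mul_mem (hbbS i₁ j) hsS)
  choose aa haaR haaEq using hker
  have hfin : r * ((∑ j, γ j * aa (i₁, j)) + φx (y₂ * s₀)) = 1 := by
    rw [mul_add, Finset.mul_sum]
    rw [hφeq]
    congr 1
    exact Finset.sum_congr rfl fun j _ => by rw [haaEq (i₁, j)]; ring
  exact hR.2.2.1 ⟨_, add_mem (sum_mem fun j _ => R.mul_mem (hγR j) (haaR (i₁, j)))
    (hlin.maps_to _ hXS), hfin⟩

end Gen6Ker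
set_option maxHeartbeats 1000000 in
set_option synthInstance.maxHeartbeats 400000 in
/-- with a free basis of `R^{1/p^e}` as in the basis lemma, any `R`-linear map
`φₓ` sending a top-row basis element `u (p^e-1) j₀ * r^{(p^e-1)/p^e}` to `1` generates
`Hom_R(R^{1/p^e}, R)` as an `R^{1/p^e}`-module. -/
theorem generator_of_hom_of_DVR {Ω : Type*} [Field Ω] (p : ℕ) [Fact p.Prime] [CharP Ω p]
    (R : Subring Ω) (r ρ : Ω) (hR : IsDVRWith R r)
    (e m : ℕ) (hρ : ρ ^ p ^ e = r)
    (u : Fin (p ^ e) → Fin m → Ω)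
    (hu : ∀ i, IsBasisModOn R (pRoots p e R) r ρ (u i))
    (itop : Fin (p ^ e)) (hitop : (itop : ℕ) = p ^ e - 1) (j₀ : Fin m)
    (φx : Ω → Ω) (hlin : IsLinearOn R (pRoots p e R) R φx)
    (hval : φx (u itop j₀ * ρ ^ (p ^ e - 1)) = 1) :
    ∀ ψ : Ω → Ω, IsLinearOn R (pRoots p e R) R ψ →
      ∃ t ∈ pRoots p e R, ∀ a ∈ pRoots p e R, ψ a = φx (t * a) := by
  classical
  intro ψ hψ
  have hρS : ρ ∈ pRoots p e R := by rw [gen6_mem_pRoots, hρ]; exact hR.1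
  set b : Fin (p ^ e) × Fin m → Ω := fun α => u α.1 α.2 * ρ ^ (α.1 : ℕ) with hbdef
  have hbS : ∀ α, b α ∈ pRoots p e R := fun α => mul_mem ((hu α.1).1 α.2) (pow_mem hρS _)
  set Rr : ↥R := ⟨r, hR.1⟩ with hRrdef
  set G : Matrix (Fin (p ^ e) × Fin m) (Fin (p ^ e) × Fin m) ↥R :=
    fun α β => ⟨φx (b α * b β), hlin.maps_to _ (mul_mem (hbS α) (hbS β))⟩ with hGdef
  have hspan : ∀ x : ↥R, x ∈ Ideal.span {Rr} ↔ ∃ a ∈ R, (x : Ω) = r * a := by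
    intro x
    rw [Ideal.mem_span_singleton]
    constructor
    · rintro ⟨a, ha⟩
      exact ⟨(a : Ω), a.2, congrArg Subtype.val ha⟩
    · rintro ⟨a, haR, hax⟩
      exact ⟨⟨a, haR⟩, Subtype.ext hax⟩
  haveI hmax : (Ideal.span {Rr}).IsMaximal := by
    rw [Ideal.isMaximal_iff]
    constructor
    · intro h1
      obtain ⟨a, haR, ha⟩ := (hspan 1).mp h1
      exact hR.2.2.1 ⟨a, haR, ha.symm⟩
    · intro J x hle hx hxJ
      have hnot : ¬ ∃ a ∈ R, (x : Ω) = r * a := fun h => hx ((hspan x).mpr h)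
      obtain ⟨w, hwR, hw⟩ := gen6_unit_of_not_mem R hR x.2 hnot
      have h1 : (1 : ↥R) = ⟨w, hwR⟩ * x :=
        Subtype.ext (show (1 : Ω) = w * (x : Ω) from by rw [mul_comm]; exact hw.symm)
      rw [h1]
      exact J.mul_mem_left _ hxJ
  letI : Field (↥R ⧸ Ideal.span {Rr}) := Ideal.Quotient.field (Ideal.span {Rr})
  set π : ↥R →+* ↥R ⧸ Ideal.span {Rr} := Ideal.Quotient.mk (Ideal.span {Rr}) with hπdef
  have hdetmod : (G.map π).det ≠ 0 := by
    intro h0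
    obtain ⟨v, hv0, hvker⟩ := Matrix.exists_mulVec_eq_zero_iff.mpr h0
    choose cc hcc using fun α => Ideal.Quotient.mk_surjective (I := Ideal.span {Rr}) (v α)
    have hGcc : ∀ β, (G.mulVec cc) β = ∑ α, G β α * cc α := by
      intro β; simp [Matrix.mulVec, dotProduct]
    have hker' : ∀ β : Fin (p ^ e) × Fin m, ∃ a ∈ R,
        φx ((u β.1 β.2 * ρ ^ (β.1 : ℕ)) *
          ∑ α : Fin (p ^ e) × Fin m, (cc α : Ω) * (u α.1 α.2 * ρ ^ (α.1 : ℕ))) = r * a := by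
      intro β
      have h1 : π ((G.mulVec cc) β) = 0 := by
        have h2 : (G.map π).mulVec v β = 0 := congrFun hvker β
        rw [← h2, hGcc, map_sum π _ _]
        simp only [Matrix.mulVec, dotProduct, Matrix.map_apply]
        exact Finset.sum_congr rfl fun α _ => by rw [map_mul, hcc α]
      rw [Ideal.Quotient.eq_zero_iff_mem] at h1
      obtain ⟨a, haR, ha⟩ := (hspan _).mp h1
      refine ⟨a, haR, ?_⟩
      have h3 : ((G.mulVec cc) β : Ω) = ∑ α, φx (b β * b α) * (cc α : Ω) := by
        rw [hGcc]
        rw [show (((∑ α, G β α * cc α : ↥R)) : Ω) = R.subtype (∑ α, G β α * cc α) from rfl,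
          map_sum]
        exact Finset.sum_congr rfl fun α _ => by rw [map_mul]; rfl
      have h4 : φx (b β * ∑ α, (cc α : Ω) * b α) = ∑ α, φx (b β * b α) * (cc α : Ω) := by
        have h5 : b β * ∑ α, (cc α : Ω) * b α = ∑ α, (cc α : Ω) * (b β * b α) := by
          rw [Finset.mul_sum]
          exact Finset.sum_congr rfl fun α _ => by ring
        rw [h5, gen6_lin_sum hlin _ _ fun α _ =>
          mul_mem (gen6_R_le_pRoots p e R (cc α).2) (mul_mem (hbS β) (hbS α))]
        exact Finset.sum_congr rfl fun α _ => by
          rw [hlin.map_smul _ (cc α).2 _ (mul_mem (hbS β) (hbS α))]; ring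
      rw [show (u β.1 β.2 * ρ ^ (β.1 : ℕ)) = b β from rfl]
      rw [show (∑ α : Fin (p ^ e) × Fin m, (cc α : Ω) * (u α.1 α.2 * ρ ^ (α.1 : ℕ)))
        = ∑ α, (cc α : Ω) * b α from rfl]
      rw [h4, ← h3, ← ha]
    have hall := gen6_ker p R r ρ hR e m hρ u hu itop j₀ φx hlin hval
      (fun α => (cc α : Ω)) (fun α => (cc α).2) hker'
    apply hv0
    funext α
    obtain ⟨a, haR, ha⟩ := hall α
    rw [← hcc α]
    exact Ideal.Quotient.eq_zero_iff_mem.mpr ((hspan _).mpr ⟨a, haR, ha⟩)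
  have hdetR : IsUnit G.det := by
    have h1 : G.det ∉ Ideal.span {Rr} := by
      intro hmem
      have hc : π G.det = (G.map π).det := RingHom.map_det π G
      exact hdetmod (by rw [← hc]; exact Ideal.Quotient.eq_zero_iff_mem.mpr hmem)
    have hnot : ¬ ∃ a ∈ R, ((G.det : Ω)) = r * a := fun h => h1 ((hspan _).mpr h)
    obtain ⟨w, hwR, hw⟩ := gen6_unit_of_not_mem R hR G.det.2 hnot
    exact isUnit_iff_exists.mpr ⟨⟨w, hwR⟩, Subtype.ext hw,
      Subtype.ext (show w * (G.det : Ω) = 1 from by rw [mul_comm]; exact hw)⟩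
  set vψ : Fin (p ^ e) × Fin m → ↥R := fun α => ⟨ψ (b α), hψ.maps_to _ (hbS α)⟩ with hvψdef
  set d : Fin (p ^ e) × Fin m → ↥R := G⁻¹.mulVec vψ with hddef
  have hsol : G.mulVec d = vψ := by
    rw [hddef, Matrix.mulVec_mulVec, Matrix.mul_nonsing_inv G hdetR, Matrix.one_mulVec]
  set t : Ω := ∑ α, (d α : Ω) * b α with htdef
  have htS : t ∈ pRoots p e R :=
    sum_mem fun α _ => mul_mem (gen6_R_le_pRoots p e R (d α).2) (hbS α)
  have hkey : ∀ β, ψ (b β) = φx (t * b β) := by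
    intro β
    have h1 : ((G.mulVec d) β : Ω) = ψ (b β) := congrArg Subtype.val (congrFun hsol β)
    have hGd : (G.mulVec d) β = ∑ α, G β α * d α := by
      simp [Matrix.mulVec, dotProduct]
    have h2 : ((G.mulVec d) β : Ω) = ∑ α, φx (b β * b α) * (d α : Ω) := by
      rw [hGd, show (((∑ α, G β α * d α : ↥R)) : Ω) = R.subtype (∑ α, G β α * d α) from rfl,
        map_sum]
      exact Finset.sum_congr rfl fun α _ => by rw [map_mul]; rfl
    have h3 : t * b β = ∑ α, (d α : Ω) * (b β * b α) := by
      rw [htdef, Finset.sum_mul]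
      exact Finset.sum_congr rfl fun α _ => by ring
    rw [← h1, h2, h3, gen6_lin_sum hlin _ _ fun α _ =>
      mul_mem (gen6_R_le_pRoots p e R (d α).2) (mul_mem (hbS β) (hbS α))]
    exact Finset.sum_congr rfl fun α _ => by
      rw [hlin.map_smul _ (d α).2 _ (mul_mem (hbS β) (hbS α))]; ring
  refine ⟨t, htS, ?_⟩
  have hdiff : ∀ n : ℕ, ∀ a ∈ pRoots p e R, ∃ z ∈ R, ψ a - φx (t * a) = r ^ n * z := by
    intro n
    induction n with
    | zero =>
        intro a haS
        exact ⟨ψ a - φx (t * a), sub_mem (hψ.maps_to _ haS)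
          (hlin.maps_to _ (mul_mem htS haS)), by rw [pow_zero, one_mul]⟩
    | succ n ih =>
        intro a haS
        obtain ⟨c, hcR, y, hyS, hy⟩ := gen6_dev p R r ρ e m hρ u hu a haS
        obtain ⟨z, hzR, hz⟩ := ih y hyS
        refine ⟨z, hzR, ?_⟩
        have hsum1 : (∑ α : Fin (p ^ e) × Fin m, c α * (u α.1 α.2 * ρ ^ (α.1 : ℕ)))
            = ∑ α, c α * b α := rfl
        rw [hsum1] at hy
        have hBS : (∑ α, c α * b α) ∈ pRoots p e R :=
          sum_mem fun α _ => mul_mem (gen6_R_le_pRoots p e R (hcR α)) (hbS α)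
        have hψa : ψ a = (∑ α, c α * ψ (b α)) + r * ψ y := by
          rw [hy, hψ.map_add _ hBS _ (mul_mem (gen6_R_le_pRoots p e R hR.1) hyS),
            gen6_lin_sum hψ _ _ (fun α _ => mul_mem (gen6_R_le_pRoots p e R (hcR α)) (hbS α)),
            hψ.map_smul r hR.1 _ hyS]
          congr 1
          exact Finset.sum_congr rfl fun α _ => hψ.map_smul _ (hcR α) _ (hbS α)
        have hta : t * a = (∑ α, c α * (t * b α)) + r * (t * y) := by
          rw [hy, mul_add, Finset.mul_sum]
          congr 1
          · exact Finset.sum_congr rfl fun α _ => by ring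
          · ring
        have hφa : φx (t * a) = (∑ α, c α * φx (t * b α)) + r * φx (t * y) := by
          rw [hta, hlin.map_add _ (sum_mem fun α _ =>
              mul_mem (gen6_R_le_pRoots p e R (hcR α)) (mul_mem htS (hbS α)))
            _ (mul_mem (gen6_R_le_pRoots p e R hR.1) (mul_mem htS hyS)),
            gen6_lin_sum hlin _ _ (fun α _ =>
              mul_mem (gen6_R_le_pRoots p e R (hcR α)) (mul_mem htS (hbS α))),
            hlin.map_smul r hR.1 _ (mul_mem htS hyS)]
          congr 1
          exact Finset.sum_congr rfl fun α _ => hlin.map_smul _ (hcR α) _ (mul_mem htS (hbS α))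
        have hsame : (∑ α, c α * ψ (b α)) = ∑ α, c α * φx (t * b α) :=
          Finset.sum_congr rfl fun α _ => by rw [hkey α]
        calc ψ a - φx (t * a) = r * (ψ y - φx (t * y)) := by
              rw [hψa, hφa, hsame]; ring
          _ = r ^ (n + 1) * z := by rw [hz]; ring
  intro a haS
  have h0 : ψ a - φx (t * a) = 0 :=
    gen6_eq_zero_of_all_div R hR fun n => hdiff n a haS
  exact sub_eq_zero.mp h0
end

section
/- Let R = 𝔽₃[y] ⊆ S = 𝔽₃[x] with y = x⁴, and let φ : R^{1/3} → R be an R-linear map (determined by the values φ(1), φ(y^{1/3}), φ(y^{2/3}) on the free basis 1, y^{1/3}, y^{2/3}). Then φ extends to an S-linear map φ̄ : S^{1/3} → S (agreeing with φ on R^{1/3}) if and only if x divides φ(y^{1/3}) in S and x² divides φ(y^{2/3}) in S; equivalently, if and only if y divides φ(y^{1/3}) in R and y divides φ(y^{2/3}) in R. -/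
open scoped BigOperators

instance : Fact (Nat.Prime 3) := ⟨by norm_num⟩

section Aux8

variable {Ω : Type*} [Field Ω] [CharP Ω 3]

/-- Evaluation of polynomials over `𝔽₃` at `s : Ω`. -/
noncomputable def E8 (s : Ω) : Polynomial (ZMod 3) →+* Ω :=
  Polynomial.eval₂RingHom (ZMod.castHom (dvd_refl 3) Ω) s

lemma E8_apply (s : Ω) (p : Polynomial (ZMod 3)) :
    E8 s p = p.eval₂ (ZMod.castHom (dvd_refl 3) Ω) s := rfl

lemma E8_X (s : Ω) : E8 s Polynomial.X = s := Polynomial.eval₂_X _ _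

lemma E8_cube (s : Ω) (p : Polynomial (ZMod 3)) : (E8 s p) ^ 3 = E8 (s ^ 3) p := by
  have hcomp : (frobenius Ω 3).comp (ZMod.castHom (dvd_refl 3) Ω) =
      ZMod.castHom (dvd_refl 3) Ω := by
    ext a
    simp only [RingHom.comp_apply, frobenius_def]
    rw [← map_pow, ZMod.pow_card]
  calc (E8 s p) ^ 3 = frobenius Ω 3 (E8 s p) := rfl
    _ = E8 (s ^ 3) p := by
        rw [E8_apply, Polynomial.hom_eval₂, hcomp, frobenius_def, E8_apply]

lemma E8_expand (s : Ω) (k : ℕ) (p : Polynomial (ZMod 3)) :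
    E8 s (Polynomial.expand (ZMod 3) k p) = E8 (s ^ k) p := by
  rw [E8_apply, E8_apply, ← Polynomial.eval_map, ← Polynomial.eval_map,
    Polynomial.map_expand, Polynomial.expand_eval]

lemma E8_mem_closure (s : Ω) (p : Polynomial (ZMod 3)) :
    E8 s p ∈ Subring.closure ({s} : Set Ω) := by
  induction p using Polynomial.induction_on with
  | C a =>
    have : E8 s (Polynomial.C a) = ((a.val : ℕ) : Ω) := by
      rw [E8_apply, Polynomial.eval₂_C, ZMod.castHom_apply, ← ZMod.natCast_val]
    rw [this]
    exact natCast_mem _ _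
  | add p q hp hq => rw [map_add]; exact Subring.add_mem _ hp hq
  | monomial n a ih =>
    have : E8 s (Polynomial.C a * Polynomial.X ^ (n + 1)) =
        E8 s (Polynomial.C a * Polynomial.X ^ n) * s := by
      rw [map_mul, map_mul, map_pow, map_pow, E8_X, pow_succ]; ring
    rw [this]
    exact Subring.mul_mem _ ih (Subring.subset_closure rfl)

lemma mem_closure_iff_E8 {s z : Ω} :
    z ∈ Subring.closure ({s} : Set Ω) ↔ ∃ p, E8 s p = z := by
  constructor
  · intro h
    have hle : Subring.closure ({s} : Set Ω) ≤ (E8 s).range :=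
      Subring.closure_le.2 (by simpa using ⟨Polynomial.X, E8_X s⟩)
    exact hle h
  · rintro ⟨p, rfl⟩
    exact E8_mem_closure s p

lemma E8_inj (t : Ω)
    (htrans : ∀ f : Polynomial Ω, (∀ i, f.coeff i ∈ (⊥ : Subring Ω)) →
      f.eval t = 0 → f = 0) {p : Polynomial (ZMod 3)} (h : E8 t p = 0) : p = 0 := by
  set f := ZMod.castHom (dvd_refl 3) Ω with hf
  have hmap : p.map f = 0 := by
    apply htrans
    · intro i
      rw [Polynomial.coeff_map]
      rw [Subring.mem_bot]
      refine ⟨((p.coeff i).val : ℤ), ?_⟩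
      rw [hf, ZMod.castHom_apply, ← ZMod.natCast_val]
      push_cast
      ring
    · rw [Polynomial.eval_map]
      exact h
  have hinj : Function.Injective f := f.injective
  exact Polynomial.map_injective f hinj (by simpa using hmap)

lemma cube_inj8 {a b : Ω} (h : a ^ 3 = b ^ 3) : a = b := by
  have h3 : (a - b) ^ 3 = 0 := by
    rw [sub_pow_char, h, sub_self]
  have := pow_eq_zero_iff (n := 3) (by norm_num) |>.1 h3
  exact sub_eq_zero.1 this

/-- Linear independence of `1, s3, s3²` over `𝔽₃[t]`. -/
lemma indep8 (t s3 : Ω) (hs3 : s3 ^ 3 = t)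
    (htrans : ∀ f : Polynomial Ω, (∀ i, f.coeff i ∈ (⊥ : Subring Ω)) →
      f.eval t = 0 → f = 0)
    {c₀ c₁ c₂ : Ω}
    (h₀ : c₀ ∈ Subring.closure ({t} : Set Ω))
    (h₁ : c₁ ∈ Subring.closure ({t} : Set Ω))
    (h₂ : c₂ ∈ Subring.closure ({t} : Set Ω))
    (hsum : c₀ + c₁ * s3 + c₂ * s3 ^ 2 = 0) : c₀ = 0 ∧ c₁ = 0 ∧ c₂ = 0 := by
  obtain ⟨p₀, hp₀⟩ := mem_closure_iff_E8.1 h₀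
  obtain ⟨p₁, hp₁⟩ := mem_closure_iff_E8.1 h₁
  obtain ⟨p₂, hp₂⟩ := mem_closure_iff_E8.1 h₂
  have hcube : c₀ ^ 3 + c₁ ^ 3 * t + c₂ ^ 3 * t ^ 2 = 0 := by
    have h3 : c₀ ^ 3 + c₁ ^ 3 * t + c₂ ^ 3 * t ^ 2 = (c₀ + c₁ * s3 + c₂ * s3 ^ 2) ^ 3 := by
      rw [add_pow_char, add_pow_char, ← hs3]
      ring
    rw [h3, hsum]
    simp
  set q : Polynomial (ZMod 3) :=
    Polynomial.expand (ZMod 3) 3 p₀ + Polynomial.expand (ZMod 3) 3 p₁ * Polynomial.X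
      + Polynomial.expand (ZMod 3) 3 p₂ * Polynomial.X ^ 2 with hqdef
  have hq : E8 t q = 0 := by
    rw [hqdef]
    rw [map_add, map_add, map_mul, map_mul, map_pow, E8_X,
      E8_expand, E8_expand, E8_expand, ← E8_cube, ← E8_cube, ← E8_cube,
      hp₀, hp₁, hp₂]
    exact hcube
  have hq0 : q = 0 := E8_inj t htrans hq
  have key : ∀ n, p₀.coeff n = 0 ∧ p₁.coeff n = 0 ∧ p₂.coeff n = 0 := by
    intro n
    have c0 := congrArg (fun r => Polynomial.coeff r (3 * n)) hq0
    have c1 := congrArg (fun r => Polynomial.coeff r (3 * n + 1)) hq0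
    have c2 := congrArg (fun r => Polynomial.coeff r (3 * n + 2)) hq0
    simp only [hqdef, Polynomial.coeff_add, Polynomial.coeff_zero] at c0 c1 c2
    have e10 : (Polynomial.expand (ZMod 3) 3 p₁ * Polynomial.X).coeff (3 * n) = 0 := by
      rcases Nat.eq_zero_or_pos n with rfl | hn
      · simp [Polynomial.mul_coeff_zero]
      · rw [← pow_one (Polynomial.X (R := ZMod 3)), Polynomial.coeff_mul_X_pow',
          if_pos (by omega), Polynomial.coeff_expand (by norm_num), if_neg (by omega)]
    have e20 : (Polynomial.expand (ZMod 3) 3 p₂ * Polynomial.X ^ 2).coeff (3 * n) = 0 := by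
      rcases Nat.eq_zero_or_pos n with rfl | hn
      · simp [Polynomial.mul_coeff_zero, Polynomial.coeff_X_pow]
      · rw [Polynomial.coeff_mul_X_pow', if_pos (by omega),
          Polynomial.coeff_expand (by norm_num), if_neg (by omega)]
    have e01 : (Polynomial.expand (ZMod 3) 3 p₀).coeff (3 * n + 1) = 0 := by
      rw [Polynomial.coeff_expand (by norm_num), if_neg (by omega)]
    have e21 : (Polynomial.expand (ZMod 3) 3 p₂ * Polynomial.X ^ 2).coeff (3 * n + 1) = 0 := by
      rcases Nat.eq_zero_or_pos n with rfl | hn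
      · rw [Polynomial.coeff_mul_X_pow', if_neg (by omega)]
      · rw [Polynomial.coeff_mul_X_pow', if_pos (by omega),
          Polynomial.coeff_expand (by norm_num), if_neg (by omega)]
    have e02 : (Polynomial.expand (ZMod 3) 3 p₀).coeff (3 * n + 2) = 0 := by
      rw [Polynomial.coeff_expand (by norm_num), if_neg (by omega)]
    have e12 : (Polynomial.expand (ZMod 3) 3 p₁ * Polynomial.X).coeff (3 * n + 2) = 0 := by
      rw [← pow_one (Polynomial.X (R := ZMod 3)), Polynomial.coeff_mul_X_pow',
        if_pos (by omega), Polynomial.coeff_expand (by norm_num), if_neg (by omega)]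
    refine ⟨?_, ?_, ?_⟩
    · rw [Polynomial.coeff_expand_mul' (by norm_num : 0 < 3), e10, e20] at c0
      simpa using c0
    · rw [e01, e21, ← pow_one (Polynomial.X (R := ZMod 3)), Polynomial.coeff_mul_X_pow',
        if_pos (by omega)] at c1
      have : (Polynomial.expand (ZMod 3) 3 p₁).coeff (3 * n + 1 - 1) = p₁.coeff n := by
        have h31 : 3 * n + 1 - 1 = 3 * n := by omega
        rw [h31, Polynomial.coeff_expand_mul' (by norm_num : 0 < 3)]
      rw [this] at c1
      simpa using c1
    · rw [e02, e12, Polynomial.coeff_mul_X_pow', if_pos (by omega)] at c2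
      have : (Polynomial.expand (ZMod 3) 3 p₂).coeff (3 * n + 2 - 2) = p₂.coeff n := by
        have h32 : 3 * n + 2 - 2 = 3 * n := by omega
        rw [h32, Polynomial.coeff_expand_mul' (by norm_num : 0 < 3)]
      rw [this] at c2
      simpa using c2
  have hp00 : p₀ = 0 := Polynomial.ext fun n => (key n).1
  have hp10 : p₁ = 0 := Polynomial.ext fun n => (key n).2.1
  have hp20 : p₂ = 0 := Polynomial.ext fun n => (key n).2.2
  refine ⟨?_, ?_, ?_⟩
  · rw [← hp₀, hp00, map_zero]
  · rw [← hp₁, hp10, map_zero]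
  · rw [← hp₂, hp20, map_zero]

/-- Everything in the subring generated by `u` with `u³ ∈ A` lies in `A + Au + Au²`. -/
lemma cube_span8 (A : Subring Ω) (u : Ω) (hu : u ^ 3 ∈ A) {z : Ω}
    (hz : z ∈ Subring.closure ({u} : Set Ω)) :
    ∃ c₀ ∈ A, ∃ c₁ ∈ A, ∃ c₂ ∈ A, z = c₀ + c₁ * u + c₂ * u ^ 2 := by
  let T : Subring Ω :=
    { carrier := {z | ∃ c₀ ∈ A, ∃ c₁ ∈ A, ∃ c₂ ∈ A, z = c₀ + c₁ * u + c₂ * u ^ 2}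
      one_mem' := ⟨1, A.one_mem, 0, A.zero_mem, 0, A.zero_mem, by ring⟩
      zero_mem' := ⟨0, A.zero_mem, 0, A.zero_mem, 0, A.zero_mem, by ring⟩
      add_mem' := by
        rintro x y ⟨a₀, ha₀, a₁, ha₁, a₂, ha₂, rfl⟩ ⟨b₀, hb₀, b₁, hb₁, b₂, hb₂, rfl⟩
        exact ⟨a₀ + b₀, A.add_mem ha₀ hb₀, a₁ + b₁, A.add_mem ha₁ hb₁,
          a₂ + b₂, A.add_mem ha₂ hb₂, by ring⟩
      neg_mem' := by
        rintro x ⟨a₀, ha₀, a₁, ha₁, a₂, ha₂, rfl⟩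
        exact ⟨-a₀, A.neg_mem ha₀, -a₁, A.neg_mem ha₁, -a₂, A.neg_mem ha₂, by ring⟩
      mul_mem' := by
        rintro x y ⟨a₀, ha₀, a₁, ha₁, a₂, ha₂, rfl⟩ ⟨b₀, hb₀, b₁, hb₁, b₂, hb₂, rfl⟩
        refine ⟨a₀ * b₀ + (a₁ * b₂ + a₂ * b₁) * u ^ 3,
          A.add_mem (A.mul_mem ha₀ hb₀)
            (A.mul_mem (A.add_mem (A.mul_mem ha₁ hb₂) (A.mul_mem ha₂ hb₁)) hu),
          a₀ * b₁ + a₁ * b₀ + a₂ * b₂ * u ^ 3,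
          A.add_mem (A.add_mem (A.mul_mem ha₀ hb₁) (A.mul_mem ha₁ hb₀))
            (A.mul_mem (A.mul_mem ha₂ hb₂) hu),
          a₀ * b₂ + a₁ * b₁ + a₂ * b₀,
          A.add_mem (A.add_mem (A.mul_mem ha₀ hb₂) (A.mul_mem ha₁ hb₁)) (A.mul_mem ha₂ hb₀),
          by ring⟩ }
  have hle : Subring.closure ({u} : Set Ω) ≤ T :=
    Subring.closure_le.2 (by
      intro x hx
      rcases hx with rfl
      exact ⟨0, A.zero_mem, 1, A.one_mem, 0, A.zero_mem, by ring⟩)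
  exact hle hz

lemma mem_pRoots31 {A : Subring Ω} {z : Ω} : z ∈ pRoots 3 1 A ↔ z ^ 3 ∈ A := by
  show z ^ 3 ^ 1 ∈ A ↔ z ^ 3 ∈ A
  norm_num

lemma pRoots_sub_closure8 (s3 : Ω) {A : Subring Ω} {z : Ω}
    (hA : A = Subring.closure {s3 ^ 3}) (hz : z ∈ pRoots 3 1 A) :
    z ∈ Subring.closure ({s3} : Set Ω) := by
  have h3 : z ^ 3 ∈ A := mem_pRoots31.1 hz
  rw [hA] at h3
  obtain ⟨p, hp⟩ := mem_closure_iff_E8.1 h3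
  have : E8 s3 p = z := by
    apply cube_inj8
    rw [E8_cube, hp]
  rw [← this]
  exact E8_mem_closure s3 p

lemma div_in_R8 (t : Ω)
    (htrans : ∀ f : Polynomial Ω, (∀ i, f.coeff i ∈ (⊥ : Subring Ω)) →
      f.eval t = 0 → f = 0) (k : ℕ) (hk : k ≠ 0) {z α : Ω}
    (hz : z ∈ Subring.closure ({t ^ 4} : Set Ω)) (hα : α ∈ Subring.closure ({t} : Set Ω))
    (heq : z = t ^ k * α) :
    ∃ a ∈ Subring.closure ({t ^ 4} : Set Ω), z = t ^ 4 * a := by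
  obtain ⟨p, hp⟩ := mem_closure_iff_E8.1 hz
  obtain ⟨q, hq⟩ := mem_closure_iff_E8.1 hα
  have h0 : Polynomial.expand (ZMod 3) 4 p - Polynomial.X ^ k * q = 0 := by
    apply E8_inj t htrans
    rw [map_sub, map_mul, map_pow, E8_X, E8_expand, hp, hq, heq]
    ring
  have heq2 : Polynomial.expand (ZMod 3) 4 p = Polynomial.X ^ k * q := sub_eq_zero.1 h0
  have hc : p.coeff 0 = 0 := by
    have h := congrArg (fun r => Polynomial.coeff r 0) heq2
    simpa [Polynomial.mul_coeff_zero, Polynomial.coeff_X_pow,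
      Polynomial.coeff_expand (show (0:ℕ) < 4 by norm_num), Ne.symm hk] using h
  obtain ⟨p', hp'⟩ := Polynomial.X_dvd_iff.2 hc
  refine ⟨E8 (t ^ 4) p', E8_mem_closure _ _, ?_⟩
  rw [← hp, hp', map_mul, E8_X]

end Aux8

/-- for `R = 𝔽₃[y] ⊆ S = 𝔽₃[x]` with `y = x⁴`, a `p⁻¹`-linear map
`φ : R^{1/3} → R` extends to `S` iff `x ∣ φ(y^{1/3})` and `x² ∣ φ(y^{2/3})` in `S`,
iff `y ∣ φ(y^{1/3})` and `y ∣ φ(y^{2/3})` in `R`.  Here `t` plays the role of `x`,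
`s3 = t^{1/3}`, so `y^{1/3} = s3⁴` and `y^{2/3} = s3⁸`. -/
theorem extension_criterion_y_eq_x4 {Ω : Type*} [Field Ω] [CharP Ω 3]
    (t s3 : Ω) (hs3 : s3 ^ 3 = t)
    (htrans : ∀ f : Polynomial Ω, (∀ i, f.coeff i ∈ (⊥ : Subring Ω)) →
      f.eval t = 0 → f = 0)
    (R S : Subring Ω) (hR : R = Subring.closure {t ^ 4}) (hS : S = Subring.closure {t})
    (φ : Ω → Ω) (hφ : IsLinearOn R (pRoots 3 1 R) R φ) :
    ((∃ φbar : Ω → Ω, IsLinearOn S (pRoots 3 1 S) S φbar ∧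
        ∀ z ∈ pRoots 3 1 R, φbar z = φ z) ↔
      ((∃ a ∈ S, φ (s3 ^ 4) = t * a) ∧ (∃ a ∈ S, φ (s3 ^ 8) = t ^ 2 * a))) ∧
    (((∃ a ∈ S, φ (s3 ^ 4) = t * a) ∧ (∃ a ∈ S, φ (s3 ^ 8) = t ^ 2 * a)) ↔
      ((∃ a ∈ R, φ (s3 ^ 4) = t ^ 4 * a) ∧ (∃ a ∈ R, φ (s3 ^ 8) = t ^ 4 * a))) := by
  subst hR
  subst hS
  classical
  have htS : t ∈ Subring.closure ({t} : Set Ω) := Subring.subset_closure rfl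
  have ht4R : t ^ 4 ∈ Subring.closure ({t ^ 4} : Set Ω) := Subring.subset_closure rfl
  have hRS : Subring.closure ({t ^ 4} : Set Ω) ≤ Subring.closure ({t} : Set Ω) := by
    apply Subring.closure_le.2
    intro x hx
    rcases hx with rfl
    exact pow_mem htS 4
  have h43 : (s3 ^ 4) ^ 3 = t ^ 4 := by rw [← hs3]; ring
  have h83 : (s3 ^ 8) ^ 3 = (t ^ 4) ^ 2 := by rw [← hs3]; ring
  have hs3S : s3 ∈ pRoots 3 1 (Subring.closure ({t} : Set Ω)) :=
    mem_pRoots31.2 (by rw [hs3]; exact htS)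
  have hs32S : s3 ^ 2 ∈ pRoots 3 1 (Subring.closure ({t} : Set Ω)) :=
    mem_pRoots31.2 (by rw [show (s3 ^ 2) ^ 3 = t ^ 2 by rw [← hs3]; ring]; exact pow_mem htS 2)
  have hs34R : s3 ^ 4 ∈ pRoots 3 1 (Subring.closure ({t ^ 4} : Set Ω)) :=
    mem_pRoots31.2 (by rw [h43]; exact ht4R)
  have hs38R : s3 ^ 8 ∈ pRoots 3 1 (Subring.closure ({t ^ 4} : Set Ω)) :=
    mem_pRoots31.2 (by rw [h83]; exact pow_mem ht4R 2)
  have hRsub : ∀ r ∈ Subring.closure ({t ^ 4} : Set Ω),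
      r ∈ pRoots 3 1 (Subring.closure ({t ^ 4} : Set Ω)) :=
    fun r hr => mem_pRoots31.2 (pow_mem hr 3)
  have m1 : (1 : Ω) ∈ pRoots 3 1 (Subring.closure ({t ^ 4} : Set Ω)) :=
    mem_pRoots31.2 (by simpa using Subring.one_mem _)
  have hφ1 : φ 1 ∈ Subring.closure ({t ^ 4} : Set Ω) := hφ.maps_to 1 m1
  have iff2 : ((∃ a ∈ Subring.closure ({t} : Set Ω), φ (s3 ^ 4) = t * a) ∧
        (∃ a ∈ Subring.closure ({t} : Set Ω), φ (s3 ^ 8) = t ^ 2 * a)) ↔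
      ((∃ a ∈ Subring.closure ({t ^ 4} : Set Ω), φ (s3 ^ 4) = t ^ 4 * a) ∧
        (∃ a ∈ Subring.closure ({t ^ 4} : Set Ω), φ (s3 ^ 8) = t ^ 4 * a)) := by
    constructor
    · rintro ⟨⟨α, hα, h1⟩, ⟨β, hβ, h2⟩⟩
      have hφ4R : φ (s3 ^ 4) ∈ Subring.closure ({t ^ 4} : Set Ω) := hφ.maps_to _ hs34R
      have hφ8R : φ (s3 ^ 8) ∈ Subring.closure ({t ^ 4} : Set Ω) := hφ.maps_to _ hs38R
      exact ⟨div_in_R8 t htrans 1 one_ne_zero hφ4R hα (by rw [pow_one]; exact h1),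
        div_in_R8 t htrans 2 two_ne_zero hφ8R hβ h2⟩
    · rintro ⟨⟨a, ha, h1⟩, ⟨b, hb, h2⟩⟩
      exact ⟨⟨t ^ 3 * a, mul_mem (pow_mem htS 3) (hRS ha), by rw [h1]; ring⟩,
        ⟨t ^ 2 * b, mul_mem (pow_mem htS 2) (hRS hb), by rw [h2]; ring⟩⟩
  refine ⟨?_, iff2⟩
  constructor
  · rintro ⟨φbar, hbar, hagree⟩
    have h4 : φ (s3 ^ 4) = t * φbar s3 := by
      rw [← hagree _ hs34R, show s3 ^ 4 = t * s3 by rw [← hs3]; ring,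
        hbar.map_smul t htS s3 hs3S]
    have h8 : φ (s3 ^ 8) = t ^ 2 * φbar (s3 ^ 2) := by
      rw [← hagree _ hs38R, show s3 ^ 8 = t ^ 2 * s3 ^ 2 by rw [← hs3]; ring,
        hbar.map_smul (t ^ 2) (pow_mem htS 2) (s3 ^ 2) hs32S]
    exact ⟨⟨φbar s3, hbar.maps_to s3 hs3S, h4⟩,
      ⟨φbar (s3 ^ 2), hbar.maps_to _ hs32S, h8⟩⟩
  · intro hdiv
    obtain ⟨⟨a, ha, h1⟩, ⟨b, hb, h2⟩⟩ := iff2.1 hdiv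
    set α := t ^ 3 * a with hαdef
    set β := t ^ 2 * b with hβdef
    have hαS : α ∈ Subring.closure ({t} : Set Ω) :=
      mul_mem (pow_mem htS 3) (hRS ha)
    have hβS : β ∈ Subring.closure ({t} : Set Ω) :=
      mul_mem (pow_mem htS 2) (hRS hb)
    have h1' : φ (s3 ^ 4) = t * α := by rw [h1, hαdef]; ring
    have h2' : φ (s3 ^ 8) = t ^ 2 * β := by rw [h2, hβdef]; ring
    set P : Ω → Prop := fun z => ∃ c : Fin 3 → Ω,
      (∀ i, c i ∈ Subring.closure ({t} : Set Ω)) ∧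
        z = c 0 + c 1 * s3 + c 2 * s3 ^ 2 with hPdef
    set φb : Ω → Ω := fun z =>
      if h : P z then h.choose 0 * φ 1 + h.choose 1 * α + h.choose 2 * β else 0 with hφbdef
    have uniq : ∀ c d : Fin 3 → Ω, (∀ i, c i ∈ Subring.closure ({t} : Set Ω)) →
        (∀ i, d i ∈ Subring.closure ({t} : Set Ω)) →
        c 0 + c 1 * s3 + c 2 * s3 ^ 2 = d 0 + d 1 * s3 + d 2 * s3 ^ 2 → c = d := by
      intro c d hc hd heq
      have hzero : (c 0 - d 0) + (c 1 - d 1) * s3 + (c 2 - d 2) * s3 ^ 2 = 0 := by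
        linear_combination heq
      obtain ⟨e0, e1, e2⟩ := indep8 t s3 hs3 htrans (sub_mem (hc 0) (hd 0))
        (sub_mem (hc 1) (hd 1)) (sub_mem (hc 2) (hd 2)) hzero
      funext i
      fin_cases i
      · exact sub_eq_zero.1 e0
      · exact sub_eq_zero.1 e1
      · exact sub_eq_zero.1 e2
    have key : ∀ c₀ c₁ c₂ : Ω, c₀ ∈ Subring.closure ({t} : Set Ω) →
        c₁ ∈ Subring.closure ({t} : Set Ω) → c₂ ∈ Subring.closure ({t} : Set Ω) →
        φb (c₀ + c₁ * s3 + c₂ * s3 ^ 2) = c₀ * φ 1 + c₁ * α + c₂ * β := by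
      intro c₀ c₁ c₂ hc₀ hc₁ hc₂
      have hex : P (c₀ + c₁ * s3 + c₂ * s3 ^ 2) := by
        refine ⟨![c₀, c₁, c₂], ?_, by simp⟩
        intro i
        fin_cases i <;> simpa
      obtain ⟨hmem, hsp⟩ := hex.choose_spec
      have heqc : hex.choose = ![c₀, c₁, c₂] := by
        apply uniq _ _ hmem
        · intro i; fin_cases i <;> simpa
        · rw [← hsp]; simp
      simp only [hφbdef]
      rw [dif_pos hex, heqc]
      simp
    have exist : ∀ z ∈ pRoots 3 1 (Subring.closure ({t} : Set Ω)),
        ∃ c₀ ∈ Subring.closure ({t} : Set Ω), ∃ c₁ ∈ Subring.closure ({t} : Set Ω),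
          ∃ c₂ ∈ Subring.closure ({t} : Set Ω), z = c₀ + c₁ * s3 + c₂ * s3 ^ 2 := by
      intro z hz
      have hz' : z ∈ Subring.closure ({s3} : Set Ω) :=
        pRoots_sub_closure8 s3 (by rw [hs3]) hz
      exact cube_span8 _ s3 (by rw [hs3]; exact htS) hz'
    refine ⟨φb, ⟨?_, ?_, ?_⟩, ?_⟩
    · intro z hz
      obtain ⟨c₀, hc₀, c₁, hc₁, c₂, hc₂, rfl⟩ := exist z hz
      rw [key c₀ c₁ c₂ hc₀ hc₁ hc₂]
      exact add_mem (add_mem (mul_mem hc₀ (hRS hφ1)) (mul_mem hc₁ hαS)) (mul_mem hc₂ hβS)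
    · intro x hx y hy
      obtain ⟨c₀, hc₀, c₁, hc₁, c₂, hc₂, rfl⟩ := exist x hx
      obtain ⟨d₀, hd₀, d₁, hd₁, d₂, hd₂, rfl⟩ := exist y hy
      rw [show c₀ + c₁ * s3 + c₂ * s3 ^ 2 + (d₀ + d₁ * s3 + d₂ * s3 ^ 2)
          = (c₀ + d₀) + (c₁ + d₁) * s3 + (c₂ + d₂) * s3 ^ 2 by ring,
        key _ _ _ (add_mem hc₀ hd₀) (add_mem hc₁ hd₁) (add_mem hc₂ hd₂),
        key c₀ c₁ c₂ hc₀ hc₁ hc₂, key d₀ d₁ d₂ hd₀ hd₁ hd₂]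
      ring
    · intro r hr x hx
      obtain ⟨c₀, hc₀, c₁, hc₁, c₂, hc₂, rfl⟩ := exist x hx
      rw [show r * (c₀ + c₁ * s3 + c₂ * s3 ^ 2)
          = (r * c₀) + (r * c₁) * s3 + (r * c₂) * s3 ^ 2 by ring,
        key _ _ _ (mul_mem hr hc₀) (mul_mem hr hc₁) (mul_mem hr hc₂),
        key c₀ c₁ c₂ hc₀ hc₁ hc₂]
      ring
    · intro z hz
      have hz' : z ∈ Subring.closure ({s3 ^ 4} : Set Ω) :=
        pRoots_sub_closure8 (s3 ^ 4) (by rw [h43]) hz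
      obtain ⟨r₀, hr₀, r₁, hr₁, r₂, hr₂, hzeq⟩ :=
        cube_span8 _ (s3 ^ 4) (by rw [h43]; exact ht4R) hz'
      have hφz : φ z = r₀ * φ 1 + r₁ * φ (s3 ^ 4) + r₂ * φ (s3 ^ 8) := by
        have a1 : r₀ * 1 ∈ pRoots 3 1 (Subring.closure ({t ^ 4} : Set Ω)) :=
          mul_mem (hRsub _ hr₀) m1
        have a2 : r₁ * s3 ^ 4 ∈ pRoots 3 1 (Subring.closure ({t ^ 4} : Set Ω)) :=
          mul_mem (hRsub _ hr₁) hs34R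
        have a3 : r₂ * s3 ^ 8 ∈ pRoots 3 1 (Subring.closure ({t ^ 4} : Set Ω)) :=
          mul_mem (hRsub _ hr₂) hs38R
        rw [show z = r₀ * 1 + (r₁ * s3 ^ 4 + r₂ * s3 ^ 8) by rw [hzeq]; ring,
          hφ.map_add _ a1 _ (add_mem a2 a3), hφ.map_add _ a2 _ a3,
          hφ.map_smul r₀ hr₀ 1 m1, hφ.map_smul r₁ hr₁ _ hs34R, hφ.map_smul r₂ hr₂ _ hs38R]
        ring
      calc φb z = φb (r₀ + (r₁ * t) * s3 + (r₂ * t ^ 2) * s3 ^ 2) := by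
            rw [show r₀ + (r₁ * t) * s3 + (r₂ * t ^ 2) * s3 ^ 2 = z by
              rw [hzeq, ← hs3]; ring]
        _ = r₀ * φ 1 + (r₁ * t) * α + (r₂ * t ^ 2) * β :=
            key _ _ _ (hRS hr₀) (mul_mem (hRS hr₁) htS) (mul_mem (hRS hr₂) (pow_mem htS 2))
        _ = φ z := by rw [hφz, h1', h2']; ring
end

section
/- Let (R,𝔭) ⊆ (S,𝔮) be a tamely ramified generically finite extension of F-finite DVRs of characteristic p>0 with ramification index n, and let π : Spec S → Spec R be the induced map. With e such that n | p^e−1, b = (p^e−1)/n, and φ the map sending u_1^{1/p^e} r^{b/p^e} to 1 and all other basis elements to 0, one has Δ_φ = (1/(p^e−1))·div_R(r^{p^e−1−b}) and π*Δ_φ = Ram_π, i.e. the pullback of Δ_φ to Spec S equals (n−1)·div_S(s) where s is a uniformizer of S. -/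
open scoped BigOperators

/-- in the tame setting, writing `φ(·) = Φ(γ·)` for a generator `Φ` of
`Hom_R(R^{1/p^e}, R)` and `c = γ^{p^e}`, one has `Δ_φ = (1/(p^e-1)) div_R(r^{p^e-1-b})`
(i.e. `c` is a unit times `r^{p^e-1-b}`) and `π*Δ_φ = Ram_π` (i.e. `c` is a unit times
`s^{(n-1)(p^e-1)}` in `S`, and `n(p^e-1-b) = (n-1)(p^e-1)`). -/
theorem tame_divisor_of_explicit_map {Ω : Type*} [Field Ω]
    (p : ℕ) [Fact p.Prime] [CharP Ω p]
    (R S : Subring Ω) (r s uu : Ω) (n : ℕ) (hRS : R ≤ S)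
    (hR : IsDVRWith R r) (hS : IsDVRWith S s)
    (huu : uu ∈ S ∧ ∃ w ∈ S, uu * w = 1) (hrs : r = uu * s ^ n)
    (hgensep : IsSeparableOn (fracField R) (fracField S))
    (hressep : ∀ x ∈ S, ∃ f : Polynomial Ω, (∀ i, f.coeff i ∈ (R : Set Ω)) ∧
      (∃ y ∈ S, f.eval x = s * y) ∧
      ¬ ∃ y ∈ S, (Polynomial.derivative f).eval x = s * y)
    (hn : 0 < n) (htame : ¬ p ∣ n)
    (e : ℕ) (he : 0 < e) (b : ℕ) (hb : n * b = p ^ e - 1)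
    (ρ : Ω) (hρ : ρ ^ p ^ e = r)
    (m : ℕ) (u : Fin (m + 1) → Ω) (hu1 : u 0 = 1)
    (hubasis : IsBasisModOn R (pRoots p e R) r ρ u)
    (φ : Ω → Ω) (hφlin : IsLinearOn R (pRoots p e R) R φ)
    (hφb : φ (ρ ^ b) = 1)
    (hφ0 : ∀ (j : Fin (m + 1)) (i : ℕ), i ≤ p ^ e - 1 →
      ¬(j = 0 ∧ i = b) → φ (u j * ρ ^ i) = 0)
    (Φ : Ω → Ω) (hΦlin : IsLinearOn R (pRoots p e R) R Φ)
    (hΦgen : ∀ ψ : Ω → Ω, IsLinearOn R (pRoots p e R) R ψ →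
      ∃ t ∈ pRoots p e R, ∀ a ∈ pRoots p e R, ψ a = Φ (t * a))
    (γ : Ω) (hγ : γ ∈ pRoots p e R)
    (hrep : ∀ a ∈ pRoots p e R, φ a = Φ (γ * a)) :
    (∃ w ∈ R, (∃ w' ∈ R, w * w' = 1) ∧ γ ^ p ^ e = w * r ^ (p ^ e - 1 - b)) ∧
    (∃ w ∈ S, (∃ w' ∈ S, w * w' = 1) ∧
      γ ^ p ^ e = w * s ^ ((n - 1) * (p ^ e - 1))) ∧
    n * (p ^ e - 1 - b) = (n - 1) * (p ^ e - 1) := by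
  classical
  obtain ⟨hrR, hr0, hrnu, hRdvr⟩ := hR
  obtain ⟨hφmaps, hφadd, hφsmul⟩ := hφlin
  obtain ⟨hΦmaps, hΦadd, hΦsmul⟩ := hΦlin
  have hp2 : 2 ≤ p := (Fact.out (p := p.Prime)).two_le
  have hq2 : 2 ≤ p ^ e := le_trans hp2 (Nat.le_self_pow he.ne' p)
  set A := pRoots p e R with hAdef
  have memA : ∀ x : Ω, x ∈ A ↔ x ^ p ^ e ∈ R := fun x => Iff.rfl
  have hRA : ∀ x ∈ R, x ∈ A := fun x hx => (memA x).mpr (pow_mem hx _)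
  have hρA : ρ ∈ A := (memA ρ).mpr (by rw [hρ]; exact hrR)
  have hρ0 : ρ ≠ 0 := by
    intro h
    apply hr0
    rw [← hρ, h, zero_pow (by omega : p ^ e ≠ 0)]
  have hble : b ≤ p ^ e - 1 := by
    have h := Nat.le_mul_of_pos_left b hn
    omega
  have hφzero : φ 0 = 0 := by
    have h := hφadd 0 (zero_mem A) 0 (zero_mem A)
    rw [add_zero] at h
    exact (left_eq_add.mp h)
  have hΦzero : Φ 0 = 0 := by
    have h := hΦadd 0 (zero_mem A) 0 (zero_mem A)
    rw [add_zero] at h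
    exact (left_eq_add.mp h)
  have hφsum : ∀ (t : Finset (Fin (m + 1))) (f : Fin (m + 1) → Ω),
      (∀ j, f j ∈ A) → φ (∑ j ∈ t, f j) = ∑ j ∈ t, φ (f j) := by
    intro t
    induction t using Finset.induction_on with
    | empty => intro f hf; simpa using hφzero
    | insert _ _ hx ih =>
        intro f hf
        rw [Finset.sum_insert hx, Finset.sum_insert hx,
          hφadd _ (hf _) _ (sum_mem fun j _ => hf j), ih f hf]
  -- Key vanishing lemma: φ(ρ^E · A) ⊆ rR for E ≥ b+1.
  have key : ∀ d E x, p ^ e ≤ E + d → b + 1 ≤ E → x ∈ A →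
      ∃ w ∈ R, φ (ρ ^ E * x) = r * w := by
    intro d
    induction d with
    | zero =>
        intro E x hEd hEb hx
        have hAx : ρ ^ (E - p ^ e) * x ∈ A := mul_mem (pow_mem hρA _) hx
        have hsplit : ρ ^ E * x = r * (ρ ^ (E - p ^ e) * x) := by
          rw [← hρ, ← mul_assoc, ← pow_add, show p ^ e + (E - p ^ e) = E from by omega]
        refine ⟨φ (ρ ^ (E - p ^ e) * x), hφmaps _ hAx, ?_⟩
        rw [hsplit, hφsmul r hrR _ hAx]
    | succ d ih =>
        intro E x hEd hEb hx
        by_cases hE : p ^ e ≤ E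
        · exact ih E x (by omega) hEb hx
        · push_neg at hE
          obtain ⟨c, hc, y, hy, hxy⟩ := hubasis.2.1 x hx
          have hxex : x = (∑ j, c j * u j) + ρ * y := by linear_combination hxy
          have hsplit : ρ ^ E * x = (∑ j, c j * (u j * ρ ^ E)) + ρ ^ (E + 1) * y := by
            rw [hxex, mul_add, Finset.mul_sum, pow_succ]
            congr 1
            · exact Finset.sum_congr rfl fun j _ => by ring
            · ring
          have hsummem : (∑ j, c j * (u j * ρ ^ E)) ∈ A :=
            sum_mem fun j _ => mul_mem (hRA _ (hc j)) (mul_mem (hubasis.1 j) (pow_mem hρA E))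
          have hymem : ρ ^ (E + 1) * y ∈ A := mul_mem (pow_mem hρA _) hy
          have hsum0 : φ (∑ j, c j * (u j * ρ ^ E)) = 0 := by
            rw [hφsum _ _ fun j => mul_mem (hRA _ (hc j)) (mul_mem (hubasis.1 j) (pow_mem hρA E))]
            refine Finset.sum_eq_zero fun j _ => ?_
            rw [hφsmul _ (hc j) _ (mul_mem (hubasis.1 j) (pow_mem hρA E)),
              hφ0 j E (by omega) (by rintro ⟨-, h2⟩; omega), mul_zero]
          obtain ⟨w, hw, hww⟩ := ih (E + 1) y (by omega) (by omega) hy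
          refine ⟨w, hw, ?_⟩
          rw [hsplit, hφadd _ hsummem _ hymem, hsum0, zero_add, hww]
  -- Decomposition: A is a DVR with uniformizer ρ.
  have hdec : ∀ x, x ∈ A → x ≠ 0 → ∃ (k : ℕ) (w : Ω), w ∈ A ∧ (∃ w' ∈ A, w * w' = 1) ∧
      x = w * ρ ^ k := by
    intro x hx hx0
    obtain ⟨k, w, hwR, ⟨w', hw'R, hww'⟩, hxw⟩ := hRdvr (x ^ p ^ e) hx (pow_ne_zero _ hx0)
    have hρk : (ρ ^ k) ^ p ^ e = r ^ k := by
      rw [← pow_mul, mul_comm, pow_mul, hρ]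
    have hrk0 : (r : Ω) ^ k ≠ 0 := pow_ne_zero _ hr0
    have h1 : (x / ρ ^ k) ^ p ^ e = w := by
      rw [div_pow, hρk, hxw, mul_div_assoc, div_self hrk0, mul_one]
    have h2 : (ρ ^ k / x) ^ p ^ e = w' := by
      rw [div_pow, hρk, hxw, div_eq_iff (by rw [← hxw]; exact pow_ne_zero _ hx0)]
      linear_combination (-(r ^ k : Ω)) * hww'
    refine ⟨k, x / ρ ^ k, (memA _).mpr (by rw [h1]; exact hwR),
      ⟨ρ ^ k / x, (memA _).mpr (by rw [h2]; exact hw'R), ?_⟩, ?_⟩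
    · rw [div_mul_div_comm, mul_comm x (ρ ^ k), div_self (mul_ne_zero (pow_ne_zero _ hρ0) hx0)]
    · exact (div_mul_cancel₀ x (pow_ne_zero k hρ0)).symm
  -- γ ≠ 0, decompose γ = ω ρ^k
  have h1 : Φ (γ * ρ ^ b) = 1 := by
    rw [← hrep (ρ ^ b) (pow_mem hρA b), hφb]
  have hγ0 : γ ≠ 0 := by
    intro h
    rw [h, zero_mul, hΦzero] at h1
    exact one_ne_zero h1.symm
  obtain ⟨k, ω, hωA, ⟨ωi, hωiA, hωωi⟩, hγω⟩ := hdec γ hγ hγ0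
  -- direction (i): k + b < p^e
  have hkb : k + b < p ^ e := by
    by_contra hcon
    push_neg at hcon
    have hz : ω * ρ ^ (k + b - p ^ e) ∈ A := mul_mem hωA (pow_mem hρA _)
    have hsplit : γ * ρ ^ b = r * (ω * ρ ^ (k + b - p ^ e)) := by
      calc γ * ρ ^ b = ω * ρ ^ (k + b) := by rw [hγω, mul_assoc, ← pow_add]
        _ = ω * (ρ ^ (p ^ e + (k + b - p ^ e))) := by rw [show p ^ e + (k + b - p ^ e) = k + b from by omega]
        _ = r * (ω * ρ ^ (k + b - p ^ e)) := by rw [pow_add, hρ]; ring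
    rw [hsplit, hΦsmul r hrR _ hz] at h1
    exact hrnu ⟨_, hΦmaps _ hz, h1⟩
  -- The divided map ψ = φ(ρ^{b+1}·)/r is linear, so ψ = Φ(t·)
  have hψlin : IsLinearOn R A R (fun x => φ (ρ ^ (b + 1) * x) / r) := by
    refine ⟨?_, ?_, ?_⟩
    · intro x hx
      obtain ⟨w, hw, hww⟩ := key (p ^ e) (b + 1) x (by omega) le_rfl hx
      show φ (ρ ^ (b + 1) * x) / r ∈ R
      rw [hww, mul_comm, mul_div_assoc, div_self hr0, mul_one]
      exact hw
    · intro x hx y hy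
      show φ (ρ ^ (b + 1) * (x + y)) / r = _ / r + _ / r
      rw [mul_add, hφadd _ (mul_mem (pow_mem hρA _) hx) _ (mul_mem (pow_mem hρA _) hy), add_div]
    · intro a ha x hx
      show φ (ρ ^ (b + 1) * (a * x)) / r = a * (φ (ρ ^ (b + 1) * x) / r)
      rw [show ρ ^ (b + 1) * (a * x) = a * (ρ ^ (b + 1) * x) from by ring,
        hφsmul a ha _ (mul_mem (pow_mem hρA _) hx), mul_div_assoc]
  obtain ⟨t, htA, hteq⟩ := hΦgen _ hψlin
  have hteq' : ∀ a ∈ A, φ (ρ ^ (b + 1) * a) = r * Φ (t * a) := by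
    intro a ha
    have h : φ (ρ ^ (b + 1) * a) / r = Φ (t * a) := hteq a ha
    rw [div_eq_iff hr0] at h
    rw [h, mul_comm]
  -- t is a unit of A
  have hrbval : φ (ρ ^ (b + 1) * ρ ^ (p ^ e - 1)) = r := by
    have hsp : ρ ^ (b + 1) * ρ ^ (p ^ e - 1) = r * ρ ^ b := by
      rw [← pow_add, show b + 1 + (p ^ e - 1) = p ^ e + b from by omega, pow_add, hρ]
    rw [hsp, hφsmul r hrR _ (pow_mem hρA b), hφb, mul_one]
  have hΦt1 : Φ (t * ρ ^ (p ^ e - 1)) = 1 := by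
    have h := hteq' (ρ ^ (p ^ e - 1)) (pow_mem hρA _)
    rw [hrbval] at h
    have h2 : r * 1 = r * Φ (t * ρ ^ (p ^ e - 1)) := by rw [mul_one]; exact h
    exact (mul_left_cancel₀ hr0 h2).symm
  have ht0 : t ≠ 0 := by
    intro h
    rw [h, zero_mul, hΦzero] at hΦt1
    exact one_ne_zero hΦt1.symm
  obtain ⟨l, τ, hτA, ⟨τi, hτiA, hττi⟩, htτ⟩ := hdec t htA ht0
  have hl0 : l = 0 := by
    by_contra hl
    have hz : τ * ρ ^ (l - 1) ∈ A := mul_mem hτA (pow_mem hρA _)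
    have hsp : t * ρ ^ (p ^ e - 1) = r * (τ * ρ ^ (l - 1)) := by
      rw [htτ, mul_assoc, ← pow_add, show l + (p ^ e - 1) = p ^ e + (l - 1) from by omega,
        pow_add, hρ]
      ring
    rw [hsp, hΦsmul r hrR _ hz] at hΦt1
    exact hrnu ⟨_, hΦmaps _ hz, hΦt1⟩
  rw [hl0, pow_zero, mul_one] at htτ
  have htti : t * τi = 1 := by rw [htτ]; exact hττi
  -- the functional equation
  have hFE : ∀ a ∈ A, φ (ρ ^ (b + 1) * (τi * (γ * a))) = r * φ a := by
    intro a ha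
    have h := hteq' (τi * (γ * a)) (mul_mem hτiA (mul_mem hγ ha))
    rw [show t * (τi * (γ * a)) = (t * τi) * (γ * a) from by ring, htti, one_mul,
      ← hrep a ha] at h
    exact h
  -- pin down k
  have hkeq : k + b + 1 = p ^ e := by
    by_contra hne
    have hK : k + b + 1 < p ^ e := by omega
    set M := p ^ e - (k + b + 1) with hMdef
    have haA : ρ ^ (M + b) * (t * ωi) ∈ A := mul_mem (pow_mem hρA _) (mul_mem htA hωiA)
    have h3 := hFE _ haA
    have h4 : ρ ^ (b + 1) * (τi * (γ * (ρ ^ (M + b) * (t * ωi)))) = r * ρ ^ b := by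
      rw [hγω, htτ]
      rw [show τi * (ω * ρ ^ k * (ρ ^ (M + b) * (τ * ωi))) =
        (τ * τi) * ((ω * ωi) * (ρ ^ k * ρ ^ (M + b))) from by ring, hττi, hωωi, one_mul,
        one_mul]
      rw [← pow_add, ← pow_add, show b + 1 + (k + (M + b)) = p ^ e + b from by omega,
        pow_add, hρ]
    rw [h4, hφsmul r hrR _ (pow_mem hρA b), hφb, mul_one] at h3
    have h5 : φ (ρ ^ (M + b) * (t * ωi)) = 1 := by
      have h6 : r * 1 = r * φ (ρ ^ (M + b) * (t * ωi)) := by rw [mul_one]; exact h3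
      exact (mul_left_cancel₀ hr0 h6).symm
    obtain ⟨w, hw, hww⟩ := key (p ^ e) (M + b) (t * ωi) (by omega) (by omega)
      (mul_mem htA hωiA)
    rw [h5] at hww
    exact hrnu ⟨w, hw, hww.symm⟩
  have hk : k = p ^ e - 1 - b := by omega
  have hγpow : γ ^ p ^ e = ω ^ p ^ e * r ^ k := by
    rw [hγω, mul_pow, ← pow_mul, mul_comm k (p ^ e), pow_mul, hρ]
  have hωR : ω ^ p ^ e ∈ R := hωA
  have hωiR : ωi ^ p ^ e ∈ R := hωiA
  have hbz : (n : ℤ) * (b : ℤ) = (p : ℤ) ^ e - 1 := by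
    have h := hb
    zify [show 1 ≤ p ^ e from by omega] at h
    exact h
  have harith : n * (p ^ e - 1 - b) = (n - 1) * (p ^ e - 1) := by
    zify [hble, hn, show 1 ≤ p ^ e from by omega]
    linear_combination (-1 : ℤ) * hbz
  refine ⟨⟨ω ^ p ^ e, hωR, ⟨ωi ^ p ^ e, hωiR, by rw [← mul_pow, hωωi, one_pow]⟩,
    by rw [hγpow, hk]⟩, ?_, harith⟩
  obtain ⟨huuS, wuu, hwuuS, huuw⟩ := huu
  have hnk : n * k = (n - 1) * (p ^ e - 1) := by rw [hk]; exact harith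
  refine ⟨ω ^ p ^ e * uu ^ k, mul_mem (hRS hωR) (pow_mem huuS k),
    ⟨ωi ^ p ^ e * wuu ^ k, mul_mem (hRS hωiR) (pow_mem hwuuS k), ?_⟩, ?_⟩
  · rw [mul_mul_mul_comm, ← mul_pow, ← mul_pow, hωωi, huuw, one_pow, one_pow, one_mul]
  · rw [hγpow, hrs, mul_pow, ← pow_mul, hnk, mul_assoc]
end
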